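/- arXiv:2210.05492 — 6 statements merged into one kernel-verified Lean document; each statement's English description precedes it below -/
import Mathlib

section
/- For every t ≥ 1, the piKL iterate x^{t+1} is the unique maximizer over the simplex Δ(A) of the function x ↦ −φ(x)/(η t) + ⟨Ū^t, x⟩ − λ D_KL(x‖τ), where Ū^t := (1/t)∑_{s=1}^t u^s. In other words, the closed-form softmax update of piKL coincides with the follow-the-regularized-leader update for the KL-regularized utilities. -/
open Finset Real

noncomputable section

/-- The probability simplex over a finite set `A`. -/
def simplex (A : Type*) [Fintype A] : Set (A → ℝ) :=
  {x | (∀ a, 0 ≤ x a) ∧ ∑ a, x a = 1}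

/-- KL divergence (with the convention `0 log 0 = 0`, automatic here). -/
def KL {A : Type*} [Fintype A] (x y : A → ℝ) : ℝ :=
  ∑ a, x a * Real.log (x a / y a)

/-- Negative entropy. -/
def negEnt {A : Type*} [Fintype A] (x : A → ℝ) : ℝ :=
  ∑ a, x a * Real.log (x a)

/-- Euclidean inner product on `A → ℝ`. -/
def ip {A : Type*} [Fintype A] (u x : A → ℝ) : ℝ := ∑ a, u a * x a

lemma gibbs_strict {A : Type*} [Fintype A] (y p : A → ℝ)
    (hy : ∀ a, 0 ≤ y a) (hp : ∀ a, 0 < p a)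
    (hs : ∑ a, y a = ∑ a, p a) (hne : y ≠ p) :
    0 < ∑ a, y a * Real.log (y a / p a) := by
  obtain ⟨a0, ha0⟩ := Function.ne_iff.mp hne
  have hterm : ∀ i : A, y i - p i ≤ y i * Real.log (y i / p i) := by
    intro i
    rcases eq_or_lt_of_le (hy i) with h0 | h0
    · simp [← h0]; linarith [(hp i).le]
    · have hlog : Real.log (p i / y i) ≤ p i / y i - 1 :=
        Real.log_le_sub_one_of_pos (div_pos (hp i) h0)
      have hinv : Real.log (p i / y i) = - Real.log (y i / p i) := by
        rw [← Real.log_inv]; congr 1; field_simp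
      rw [hinv] at hlog
      have := mul_le_mul_of_nonneg_left (by linarith : 1 - p i / y i ≤ Real.log (y i / p i)) h0.le
      have hyi : y i * (1 - p i / y i) = y i - p i := by field_simp
      linarith
  have hstrict : y a0 - p a0 < y a0 * Real.log (y a0 / p a0) := by
    rcases eq_or_lt_of_le (hy a0) with h0 | h0
    · simp [← h0]; exact hp a0
    · have hlog : Real.log (p a0 / y a0) < p a0 / y a0 - 1 := by
        apply Real.log_lt_sub_one_of_pos (div_pos (hp a0) h0)
        intro h
        exact ha0 ((div_eq_one_iff_eq h0.ne').mp h).symm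
      have hinv : Real.log (p a0 / y a0) = - Real.log (y a0 / p a0) := by
        rw [← Real.log_inv]; congr 1; field_simp
      rw [hinv] at hlog
      have := mul_lt_mul_of_pos_left (by linarith : 1 - p a0 / y a0 < Real.log (y a0 / p a0)) h0
      have hyi : y a0 * (1 - p a0 / y a0) = y a0 - p a0 := by field_simp
      linarith
  have hsum : ∑ a, (y a - p a) < ∑ a, y a * Real.log (y a / p a) :=
    Finset.sum_lt_sum (fun i _ => hterm i) ⟨a0, Finset.mem_univ a0, hstrict⟩
  have hz : ∑ a, (y a - p a) = 0 := by rw [Finset.sum_sub_distrib, hs, sub_self]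
  linarith


/-- For every `t ≥ 1`, the piKL iterate `x (t+1)` (given by the closed-form
softmax update) is the unique maximizer over the simplex of
`x ↦ −φ(x)/(η t) + ⟨Ū^t, x⟩ − λ D_KL(x‖τ)`, where `Ū^t = (1/t) ∑_{s=1}^t u^s`. -/
theorem pikl_iterate_is_unique_ftrl_maximizer
    {A : Type*} [Fintype A] [Nonempty A]
    (τ : A → ℝ) (hτ : τ ∈ simplex A) (hτpos : ∀ a, 0 < τ a)
    (lam η : ℝ) (hlam : 0 < lam) (hη : 0 < η)
    (u : ℕ → A → ℝ)
    (x : ℕ → A → ℝ)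
    (hx1 : ∀ a, x 1 a = (Fintype.card A : ℝ)⁻¹)
    (hxsucc : ∀ t, 1 ≤ t → ∀ a : A,
      x (t + 1) a =
        Real.exp ((((t : ℝ)⁻¹ * ∑ s ∈ Finset.Icc 1 t, u s a) + lam * Real.log (τ a))
            / (lam + 1 / (η * t)))
        / ∑ b, Real.exp ((((t : ℝ)⁻¹ * ∑ s ∈ Finset.Icc 1 t, u s b) + lam * Real.log (τ b))
            / (lam + 1 / (η * t)))) :
    ∀ t, 1 ≤ t →
      x (t + 1) ∈ simplex A ∧
      ∀ y ∈ simplex A, y ≠ x (t + 1) →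
        (-(negEnt y) / (η * t)
            + ip (fun a => (t : ℝ)⁻¹ * ∑ s ∈ Finset.Icc 1 t, u s a) y
            - lam * KL y τ)
        < (-(negEnt (x (t + 1))) / (η * t)
            + ip (fun a => (t : ℝ)⁻¹ * ∑ s ∈ Finset.Icc 1 t, u s a) (x (t + 1))
            - lam * KL (x (t + 1)) τ) := by
  intro t ht
  have ht0 : (0:ℝ) < t := by exact_mod_cast ht
  set c : ℝ := lam + 1 / (η * t) with hc_def
  have hc : 0 < c := by positivity
  set U : A → ℝ := fun a => (t : ℝ)⁻¹ * ∑ s ∈ Finset.Icc 1 t, u s a with hU_def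
  set v : A → ℝ := fun a => U a + lam * Real.log (τ a) with hv_def
  set Z : ℝ := ∑ b, Real.exp (v b / c) with hZ_def
  have hZ : 0 < Z := Finset.sum_pos (fun b _ => Real.exp_pos _) Finset.univ_nonempty
  have hxp : ∀ a, x (t + 1) a = Real.exp (v a / c) / Z := hxsucc t ht
  have hppos : ∀ a, 0 < x (t + 1) a := by
    intro a; rw [hxp a]; positivity
  have hpsum : ∑ a, x (t + 1) a = 1 := by
    simp_rw [hxp]; rw [← Finset.sum_div, ← hZ_def, div_self hZ.ne']
  have hmem : x (t + 1) ∈ simplex A := ⟨fun a => (hppos a).le, hpsum⟩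
  -- key identity
  have key : ∀ y : A → ℝ, (∀ a, 0 ≤ y a) → ∑ a, y a = 1 →
      -(negEnt y) / (η * t) + ip U y - lam * KL y τ
        = c * Real.log Z - c * KL y (x (t + 1)) := by
    intro y hy hy1
    have lhs_eq : -(negEnt y) / (η * t) + ip U y - lam * KL y τ
        = ∑ a, y a * (v a - c * Real.log (y a)) := by
      unfold negEnt KL ip
      rw [← Finset.sum_neg_distrib, Finset.sum_div, Finset.mul_sum,
        ← Finset.sum_add_distrib, ← Finset.sum_sub_distrib]
      apply Finset.sum_congr rfl
      intro a _
      rcases eq_or_lt_of_le (hy a) with h0 | h0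
      · simp [← h0]
      · rw [Real.log_div h0.ne' (hτpos a).ne']
        simp only [hv_def, hc_def]
        ring
    have rhs_eq : c * Real.log Z - c * KL y (x (t + 1))
        = ∑ a, y a * (v a - c * Real.log (y a)) := by
      unfold KL
      have h1 : c * Real.log Z = ∑ a, y a * (c * Real.log Z) := by
        rw [← Finset.sum_mul, hy1, one_mul]
      rw [h1, Finset.mul_sum, ← Finset.sum_sub_distrib]
      apply Finset.sum_congr rfl
      intro a _
      rcases eq_or_lt_of_le (hy a) with h0 | h0
      · simp [← h0]
      · rw [hxp a, div_div_eq_mul_div, Real.log_div (by positivity) (Real.exp_ne_zero _),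
          Real.log_mul h0.ne' hZ.ne', Real.log_exp]
        field_simp
        ring
    rw [lhs_eq, rhs_eq]
  have hKLself : KL (x (t + 1)) (x (t + 1)) = 0 := by
    unfold KL
    apply Finset.sum_eq_zero
    intro a _
    rw [div_self (hppos a).ne', Real.log_one, mul_zero]
  refine ⟨hmem, fun y hy hne => ?_⟩
  rw [key y hy.1 hy.2, key (x (t + 1)) (fun a => (hppos a).le) hpsum, hKLself]
  have hKLpos : 0 < KL y (x (t + 1)) :=
    gibbs_strict y (x (t + 1)) hy.1 hppos (by rw [hy.2, hpsum]) hne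
  nlinarith [hKLpos, hc]
end
end

section
/- For every t ≥ 1 and all x, x' ∈ Δ(A), the piKL iterates satisfy the identity ⟨ (η/(ηλt + 1)) (−u^t + λ∇φ(x^t) − λ∇φ(τ)) + ∇φ(x^{t+1}) − ∇φ(x^t), x − x' ⟩ = 0. -/
open Finset Real

noncomputable section

/-- Gradient of the negative entropy `φ`. -/
def gradPhi {A : Type*} (y : A → ℝ) : A → ℝ := fun a => 1 + Real.log (y a)

/-- for every `t ≥ 1` and all `x, x' ∈ Δ(A)`, the piKL iterates satisfy
`⟨ (η/(ηλt + 1)) (−u^t + λ∇φ(x^t) − λ∇φ(τ)) + ∇φ(x^{t+1}) − ∇φ(x^t), x − x' ⟩ = 0`. -/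
theorem pikl_ftrl_to_omd_identity
    {A : Type*} [Fintype A] [Nonempty A]
    (τ : A → ℝ) (hτ : τ ∈ simplex A) (hτpos : ∀ a, 0 < τ a)
    (lam η : ℝ) (hlam : 0 < lam) (hη : 0 < η)
    (u : ℕ → A → ℝ)
    (x : ℕ → A → ℝ)
    (hx1 : ∀ a, x 1 a = (Fintype.card A : ℝ)⁻¹)
    (hxsucc : ∀ t, 1 ≤ t → ∀ a : A,
      x (t + 1) a =
        Real.exp ((((t : ℝ)⁻¹ * ∑ s ∈ Finset.Icc 1 t, u s a) + lam * Real.log (τ a))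
            / (lam + 1 / (η * t)))
        / ∑ b, Real.exp ((((t : ℝ)⁻¹ * ∑ s ∈ Finset.Icc 1 t, u s b) + lam * Real.log (τ b))
            / (lam + 1 / (η * t)))) :
    ∀ t : ℕ, 1 ≤ t → ∀ xx ∈ simplex A, ∀ xx' ∈ simplex A,
      ip ((η / (η * lam * (t : ℝ) + 1)) • (-(u t) + lam • gradPhi (x t) - lam • gradPhi τ)
            + gradPhi (x (t + 1)) - gradPhi (x t))
         (xx - xx') = 0 := by
  have hL : ∃ L : ℕ → A → ℝ, ∀ m a, L m a =
      (((m : ℝ)⁻¹ * ∑ s ∈ Finset.Icc 1 m, u s a) + lam * Real.log (τ a)) / (lam + 1 / (η * m)) :=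
    ⟨_, fun _ _ => rfl⟩
  obtain ⟨L, hLdef⟩ := hL
  set Z : ℕ → ℝ := fun m => ∑ b, Real.exp (L m b) with hZdef
  have hZpos : ∀ m, 0 < Z m :=
    fun m => Finset.sum_pos (fun b _ => Real.exp_pos _) ⟨Classical.arbitrary A, Finset.mem_univ _⟩
  have hlogx : ∀ m : ℕ, 1 ≤ m → ∀ a, Real.log (x (m + 1) a) = L m a - Real.log (Z m) := by
    intro m hm a
    rw [hxsucc m hm a]
    have : (∑ b, Real.exp ((((m : ℝ)⁻¹ * ∑ s ∈ Finset.Icc 1 m, u s b) + lam * Real.log (τ b))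
        / (lam + 1 / (η * m)))) = Z m := by
      rw [hZdef]
      exact Finset.sum_congr rfl (fun b _ => by rw [hLdef])
    rw [this, Real.log_div (Real.exp_ne_zero _) (ne_of_gt (hZpos m)), Real.log_exp, hLdef]
  intro t ht xx hxx xx' hxx'
  obtain ⟨hxx0, hxxs⟩ := hxx
  obtain ⟨hxx'0, hxx's⟩ := hxx'
  have hconst : ∃ K : ℝ, ∀ a,
      ((η / (η * lam * (t : ℝ) + 1)) • (-(u t) + lam • gradPhi (x t) - lam • gradPhi τ)
          + gradPhi (x (t + 1)) - gradPhi (x t)) a = K := by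
    obtain ⟨m, rfl⟩ : ∃ m, t = m + 1 := ⟨t - 1, (Nat.succ_pred_eq_of_pos ht).symm⟩
    rcases m with _ | k
    · -- t = 1
      refine ⟨(lam * η / (η * lam + 1)) * Real.log ((Fintype.card A : ℝ)⁻¹)
          - Real.log ((Fintype.card A : ℝ)⁻¹) - Real.log (Z 1), fun a => ?_⟩
      have h2 : Real.log (x 2 a) = L 1 a - Real.log (Z 1) := hlogx 1 le_rfl a
      have hL1 : L 1 a = (u 1 a + lam * Real.log (τ a)) / (lam + 1 / η) := by
        rw [hLdef]; norm_num
      simp only [Pi.add_apply, Pi.sub_apply, Pi.smul_apply, Pi.neg_apply, smul_eq_mul,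
        gradPhi, hx1 a]
      rw [show ((1 : ℕ) : ℝ) = 1 by norm_num] -- casts
      rw [h2, hL1]
      have d1 : η * lam + 1 ≠ 0 := by positivity
      have d2 : lam + 1 / η ≠ 0 := by positivity
      have d3 : η ≠ 0 := ne_of_gt hη
      field_simp
      ring
    · -- t = k + 2
      set r : ℝ := (k : ℝ) with hr
      have hr0 : (0:ℝ) ≤ r := Nat.cast_nonneg k
      refine ⟨(1 - lam * (η / (η * lam * ((k:ℕ) + 2 : ℝ) + 1))) * Real.log (Z (k + 1))
          - Real.log (Z (k + 2)), fun a => ?_⟩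
      have h1 : Real.log (x (k + 2) a) = L (k + 1) a - Real.log (Z (k + 1)) := by
        have := hlogx (k + 1) (Nat.le_add_left 1 k) a
        simpa using this
      have h2 : Real.log (x (k + 2 + 1) a) = L (k + 2) a - Real.log (Z (k + 2)) := by
        have := hlogx (k + 2) (by omega) a
        simpa using this
      have hsum : ∑ s ∈ Finset.Icc 1 (k + 2), u s a
          = (∑ s ∈ Finset.Icc 1 (k + 1), u s a) + u (k + 2) a := by
        rw [← Finset.sum_Icc_succ_top (by omega : 1 ≤ k + 2)]
      simp only [Pi.add_apply, Pi.sub_apply, Pi.smul_apply, Pi.neg_apply, smul_eq_mul, gradPhi]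
      rw [h1, h2, hLdef, hLdef, hsum]
      set S : ℝ := ∑ s ∈ Finset.Icc 1 (k + 1), u s a
      set U : ℝ := u (k + 2) a
      set T : ℝ := Real.log (τ a)
      have c1 : ((k + 1 : ℕ) : ℝ) = r + 1 := by push_cast [hr]; ring
      have c2 : ((k + 2 : ℕ) : ℝ) = r + 2 := by push_cast [hr]; ring
      rw [c1, c2]
      have d1 : η * lam * (r + 2) + 1 ≠ 0 := by positivity
      have d2 : lam + 1 / (η * (r + 1)) ≠ 0 := by positivity
      have d3 : lam + 1 / (η * (r + 2)) ≠ 0 := by positivity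
      have d4 : η ≠ 0 := ne_of_gt hη
      have d5 : r + 1 ≠ 0 := by positivity
      have d6 : r + 2 ≠ 0 := by positivity
      field_simp
      ring
  obtain ⟨K, hK⟩ := hconst
  unfold ip
  have : ∀ a ∈ Finset.univ, ((η / (η * lam * (t : ℝ) + 1)) • (-(u t) + lam • gradPhi (x t)
      - lam • gradPhi τ) + gradPhi (x (t + 1)) - gradPhi (x t)) a * (xx - xx') a
      = K * (xx a - xx' a) := by
    intro a _
    rw [hK a, Pi.sub_apply]
  rw [Finset.sum_congr rfl this, ← Finset.mul_sum, Finset.sum_sub_distrib, hxxs, hxx's]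
  ring
end
end

section
/- For every t ≥ 1 and every x ∈ Δ(A), the piKL iterates satisfy ⟨ −u^t + λ∇φ(x^t) − λ∇φ(τ), x − x^{t+1} ⟩ = (λ t + 1/η) ( D_KL(x‖x^{t+1}) − D_KL(x‖x^t) + D_KL(x^{t+1}‖x^t) ). -/
open Finset Real

noncomputable section

lemma pikl_aux
    {A : Type*} [Fintype A] [Nonempty A]
    (τ : A → ℝ) (lam η : ℝ) (hlam : 0 < lam) (hη : 0 < η)
    (u : ℕ → A → ℝ) (x : ℕ → A → ℝ)
    (hxsucc : ∀ t, 1 ≤ t → ∀ a : A,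
      x (t + 1) a =
        Real.exp ((((t : ℝ)⁻¹ * ∑ s ∈ Finset.Icc 1 t, u s a) + lam * Real.log (τ a))
            / (lam + 1 / (η * t)))
        / ∑ b, Real.exp ((((t : ℝ)⁻¹ * ∑ s ∈ Finset.Icc 1 t, u s b) + lam * Real.log (τ b))
            / (lam + 1 / (η * t))))
    (t : ℕ) (ht : 1 ≤ t) :
    (∀ a, 0 < x (t + 1) a) ∧ (∑ a, x (t + 1) a = 1) ∧
      ∃ C : ℝ, ∀ a, (lam * (t : ℝ) + 1 / η) * Real.log (x (t + 1) a)
        = (∑ s ∈ Finset.Icc 1 t, u s a) + (t : ℝ) * lam * Real.log (τ a) + C := by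
  have htR : (0 : ℝ) < (t : ℝ) := by exact_mod_cast ht
  set c : ℝ := lam + 1 / (η * t) with hc_def
  have hc : 0 < c := by positivity
  set E : A → ℝ := fun a =>
    (((t : ℝ)⁻¹ * ∑ s ∈ Finset.Icc 1 t, u s a) + lam * Real.log (τ a)) / c with hE_def
  set Z : ℝ := ∑ b, Real.exp (E b) with hZ_def
  have hZ : 0 < Z := Finset.sum_pos (fun b _ => Real.exp_pos _) Finset.univ_nonempty
  have hform : ∀ a, x (t + 1) a = Real.exp (E a) / Z := fun a => hxsucc t ht a
  have hpos : ∀ a, 0 < x (t + 1) a := fun a => by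
    rw [hform a]; exact div_pos (Real.exp_pos _) hZ
  refine ⟨hpos, ?_, ?_⟩
  · rw [Finset.sum_congr rfl (fun a _ => hform a), ← Finset.sum_div, ← hZ_def,
      div_self hZ.ne']
  · refine ⟨-(lam * (t : ℝ) + 1 / η) * Real.log Z, fun a => ?_⟩
    have hlog : Real.log (x (t + 1) a) = E a - Real.log Z := by
      rw [hform a, Real.log_div (Real.exp_pos _).ne' hZ.ne', Real.log_exp]
    rw [hlog]
    have hKc : lam * (t : ℝ) + 1 / η = (t : ℝ) * c := by
      rw [hc_def]; field_simp
    have hKE : (lam * (t : ℝ) + 1 / η) * E a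
        = (∑ s ∈ Finset.Icc 1 t, u s a) + (t : ℝ) * lam * Real.log (τ a) := by
      rw [hKc, hE_def]
      field_simp
    rw [mul_sub, hKE]
    ring

/-- for every `t ≥ 1` and every `x ∈ Δ(A)`, the piKL iterates satisfy
`⟨ −u^t + λ∇φ(x^t) − λ∇φ(τ), x − x^{t+1} ⟩
   = (λ t + 1/η) ( D_KL(x‖x^{t+1}) − D_KL(x‖x^t) + D_KL(x^{t+1}‖x^t) )`. -/
theorem pikl_prox_step_identity
    {A : Type*} [Fintype A] [Nonempty A]
    (τ : A → ℝ) (hτ : τ ∈ simplex A) (hτpos : ∀ a, 0 < τ a)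
    (lam η : ℝ) (hlam : 0 < lam) (hη : 0 < η)
    (u : ℕ → A → ℝ)
    (x : ℕ → A → ℝ)
    (hx1 : ∀ a, x 1 a = (Fintype.card A : ℝ)⁻¹)
    (hxsucc : ∀ t, 1 ≤ t → ∀ a : A,
      x (t + 1) a =
        Real.exp ((((t : ℝ)⁻¹ * ∑ s ∈ Finset.Icc 1 t, u s a) + lam * Real.log (τ a))
            / (lam + 1 / (η * t)))
        / ∑ b, Real.exp ((((t : ℝ)⁻¹ * ∑ s ∈ Finset.Icc 1 t, u s b) + lam * Real.log (τ b))
            / (lam + 1 / (η * t)))) :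
    ∀ t : ℕ, 1 ≤ t → ∀ xx ∈ simplex A,
      ip (-(u t) + lam • gradPhi (x t) - lam • gradPhi τ) (xx - x (t + 1))
        = (lam * (t : ℝ) + 1 / η)
          * (KL xx (x (t + 1)) - KL xx (x t) + KL (x (t + 1)) (x t)) := by
  intro t ht xx hxx
  obtain ⟨hxx0, hxxs⟩ := hxx
  obtain ⟨hy'pos, hy'sum, C1, hC1⟩ := pikl_aux τ lam η hlam hη u x hxsucc t ht
  -- properties of the previous iterate x t
  have hyprop : (∀ a, 0 < x t a) ∧
      ∃ C : ℝ, ∀ a, (lam * (t : ℝ) + 1 / η - lam) * Real.log (x t a)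
        = (∑ s ∈ Finset.Icc 1 (t - 1), u s a)
          + ((t : ℝ) - 1) * lam * Real.log (τ a) + C := by
    obtain ⟨r, rfl⟩ : ∃ r, t = r + 1 := ⟨t - 1, by omega⟩
    rcases Nat.eq_zero_or_pos r with hr | hr
    · subst hr
      have hcard : (0 : ℝ) < (Fintype.card A : ℝ) := by
        exact_mod_cast Fintype.card_pos
      refine ⟨fun a => by rw [hx1 a]; positivity, ?_⟩
      refine ⟨(lam * ((0 : ℕ) + 1 : ℕ) + 1 / η - lam)
          * Real.log ((Fintype.card A : ℝ)⁻¹), fun a => ?_⟩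
      simp [hx1 a]
    · obtain ⟨hp, _, C, hC⟩ := pikl_aux τ lam η hlam hη u x hxsucc r hr
      refine ⟨hp, ⟨C, fun a => ?_⟩⟩
      have h1 : lam * ((r + 1 : ℕ) : ℝ) + 1 / η - lam = lam * (r : ℝ) + 1 / η := by
        push_cast; ring
      have h2 : ((r + 1 : ℕ) : ℝ) - 1 = (r : ℝ) := by push_cast; ring
      have h3 : (r + 1) - 1 = r := by omega
      rw [h1, h2, h3]
      exact hC a
  obtain ⟨hypos, C, hC⟩ := hyprop
  -- split the sum over Icc 1 t
  have hS : ∀ a, ∑ s ∈ Finset.Icc 1 t, u s a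
      = (∑ s ∈ Finset.Icc 1 (t - 1), u s a) + u t a := by
    intro a
    obtain ⟨r, rfl⟩ : ∃ r, t = r + 1 := ⟨t - 1, by omega⟩
    rw [Finset.sum_Icc_succ_top (by omega : 1 ≤ r + 1)]
    simp
  set K : ℝ := lam * (t : ℝ) + 1 / η with hK_def
  set C' : ℝ := C1 - C with hC'_def
  have hpoint : ∀ a, -(u t a) + lam * Real.log (x t a) - lam * Real.log (τ a)
      = K * (Real.log (x t a) - Real.log (x (t + 1) a)) + C' := by
    intro a
    have h1 := hC1 a
    have h2 := hC a
    have h3 := hS a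
    rw [hK_def, hC'_def]
    linear_combination h1 - h2 + h3
  have hip : ip (-(u t) + lam • gradPhi (x t) - lam • gradPhi τ) (xx - x (t + 1))
      = ∑ a, (K * (Real.log (x t a) - Real.log (x (t + 1) a)) + C')
          * (xx a - x (t + 1) a) := by
    unfold ip gradPhi
    refine Finset.sum_congr rfl fun a _ => ?_
    simp only [Pi.sub_apply, Pi.add_apply, Pi.neg_apply, Pi.smul_apply, smul_eq_mul]
    linear_combination (xx a - x (t + 1) a) * hpoint a
  have hKL : KL xx (x (t + 1)) - KL xx (x t) + KL (x (t + 1)) (x t)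
      = ∑ a, (Real.log (x t a) - Real.log (x (t + 1) a)) * (xx a - x (t + 1) a) := by
    unfold KL
    rw [← Finset.sum_sub_distrib, ← Finset.sum_add_distrib]
    refine Finset.sum_congr rfl fun a _ => ?_
    rcases (hxx0 a).eq_or_lt with h | h
    · rw [← h]
      rw [Real.log_div (hy'pos a).ne' (hypos a).ne']
      ring
    · rw [Real.log_div h.ne' (hy'pos a).ne', Real.log_div h.ne' (hypos a).ne',
        Real.log_div (hy'pos a).ne' (hypos a).ne']
      ring
  rw [hip, hKL]
  have hzero : ∑ a, (xx a - x (t + 1) a) = 0 := by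
    rw [Finset.sum_sub_distrib, hxxs, hy'sum, sub_self]
  calc ∑ a, (K * (Real.log (x t a) - Real.log (x (t + 1) a)) + C')
          * (xx a - x (t + 1) a)
      = K * ∑ a, (Real.log (x t a) - Real.log (x (t + 1) a)) * (xx a - x (t + 1) a)
        + C' * ∑ a, (xx a - x (t + 1) a) := by
        rw [Finset.mul_sum, Finset.mul_sum, ← Finset.sum_add_distrib]
        exact Finset.sum_congr rfl fun a _ => by ring
    _ = K * ∑ a, (Real.log (x t a) - Real.log (x (t + 1) a)) * (xx a - x (t + 1) a) := by
        rw [hzero]; ring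
end
end

section
/- Suppose ‖u^t‖_∞ ≤ U for all t. Then for every T ≥ 3 and every comparator π ∈ Δ(A), the cumulative regret of the piKL iterates with respect to the regularized utilities satisfies ∑_{t=1}^T [ ũ_λ(π; u^t) − ũ_λ(x^t; u^t) ] ≤ (U²/2) · min{ 2 log T / λ, T η } + (log n)/η + λ (log n + Q), where ũ_λ(x; u) := ⟨u, x⟩ − λ D_KL(x‖τ) and Q := −(1/n) ∑_{a∈A} log τ(a). In particular, the regret with respect to the regularized utilities grows only logarithmically in T. -/
open Finset Real

noncomputable section

/-- Sup norm (maximum absolute value of the entries). -/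
def supNorm {A : Type*} [Fintype A] [Nonempty A] (u : A → ℝ) : ℝ :=
  Finset.univ.sup' Finset.univ_nonempty (fun a => |u a|)

/-- derivative of the Pinsker auxiliary function -/
private lemma pikl_hasDerivG (t : ℝ) (ht : 0 < t) :
    HasDerivAt (fun s : ℝ => 2*(s+2)*(s*Real.log s - s + 1) - 3*(s-1)^2)
      (2*(t*Real.log t - t + 1) + 2*(t+2)*Real.log t - 6*(t-1)) t := by
  have h1 : HasDerivAt (fun s : ℝ => s*Real.log s) (Real.log t + 1) t :=
    Real.hasDerivAt_mul_log ht.ne'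
  have h2 : HasDerivAt (fun s : ℝ => s*Real.log s - s + 1) (Real.log t) t := by
    simpa using (h1.sub (hasDerivAt_id t)).add_const 1
  have h3 : HasDerivAt (fun s : ℝ => 2*(s+2)) 2 t := by
    simpa using ((hasDerivAt_id t).add_const 2).const_mul 2
  have h4 := h3.mul h2
  have h5 : HasDerivAt (fun s : ℝ => 3*(s-1)^2) (3*(2*(t-1))) t := by
    simpa using (((hasDerivAt_id t).sub_const 1).pow 2).const_mul 3
  exact (h4.sub h5).congr_deriv (by ring)

private lemma pikl_hasDerivG' (t : ℝ) (ht : 0 < t) :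
    HasDerivAt (fun s : ℝ => 2*(s*Real.log s - s + 1) + 2*(s+2)*Real.log s - 6*(s-1))
      (4*Real.log t + 4*t⁻¹ - 4) t := by
  have h1 : HasDerivAt (fun s : ℝ => s*Real.log s) (Real.log t + 1) t :=
    Real.hasDerivAt_mul_log ht.ne'
  have h2 : HasDerivAt (fun s : ℝ => 2*(s*Real.log s - s + 1)) (2*Real.log t) t := by
    have := ((h1.sub (hasDerivAt_id t)).add_const 1).const_mul 2
    exact this.congr_deriv (by ring)
  have h3 : HasDerivAt (fun s : ℝ => 2*(s+2)) 2 t := by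
    simpa using ((hasDerivAt_id t).add_const 2).const_mul 2
  have h4 : HasDerivAt Real.log t⁻¹ t := Real.hasDerivAt_log ht.ne'
  have h5 := h3.mul h4
  have h6 : HasDerivAt (fun s : ℝ => 6*(s-1)) 6 t := by
    simpa using ((hasDerivAt_id t).sub_const 1).const_mul 6
  have hh := (h2.add h5).sub h6
  have : 2*(t+2)*t⁻¹ = 2 + 4*t⁻¹ := by field_simp; ring
  exact hh.congr_deriv (by rw [this]; ring)

private lemma pikl_G_nonneg {t : ℝ} (ht : 0 < t) :
    0 ≤ 2*(t+2)*(t*Real.log t - t + 1) - 3*(t-1)^2 := by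
  set g : ℝ → ℝ := fun s => 2*(s+2)*(s*Real.log s - s + 1) - 3*(s-1)^2 with hg
  set g' : ℝ → ℝ := fun s => 2*(s*Real.log s - s + 1) + 2*(s+2)*Real.log s - 6*(s-1) with hg'
  have hd : ∀ s ∈ Set.Ioi (0:ℝ), HasDerivAt g (g' s) s := fun s hs => pikl_hasDerivG s hs
  have hd' : ∀ s ∈ Set.Ioi (0:ℝ), HasDerivAt g' (4*Real.log s + 4*s⁻¹ - 4) s :=
    fun s hs => pikl_hasDerivG' s hs
  have hg'one : g' 1 = 0 := by simp [hg']
  have hgone : g 1 = 0 := by simp [hg]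
  have hg'mono : MonotoneOn g' (Set.Ioi (0:ℝ)) := by
    apply monotoneOn_of_deriv_nonneg (convex_Ioi 0)
    · exact fun s hs => ((hd' s hs).continuousAt).continuousWithinAt
    · rw [interior_Ioi]
      exact fun s hs => ((hd' s hs).differentiableAt).differentiableWithinAt
    · rw [interior_Ioi]
      intro s hs
      rw [(hd' s hs).deriv]
      have h1 : 1 - s⁻¹ ≤ Real.log s := Real.one_sub_inv_le_log_of_pos hs
      linarith
  rcases le_total 1 t with h1t | ht1
  · -- t ≥ 1 : g monotone on [1, ∞)
    have hmono : MonotoneOn g (Set.Ici (1:ℝ)) := by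
      apply monotoneOn_of_deriv_nonneg (convex_Ici 1)
      · exact fun s hs => ((hd s (Set.mem_Ioi.2 (lt_of_lt_of_le one_pos hs))).continuousAt).continuousWithinAt
      · rw [interior_Ici]
        exact fun s hs =>
          ((hd s (Set.mem_Ioi.2 (lt_trans one_pos hs))).differentiableAt).differentiableWithinAt
      · rw [interior_Ici]
        intro s hs
        rw [(hd s (Set.mem_Ioi.2 (lt_trans one_pos hs))).deriv]
        have := hg'mono (Set.mem_Ioi.2 one_pos) (Set.mem_Ioi.2 (lt_trans one_pos hs)) (le_of_lt hs)
        rw [hg'one] at this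
        exact this
    have := hmono (Set.mem_Ici.2 le_rfl) (Set.mem_Ici.2 h1t) h1t
    rw [hgone] at this
    exact this
  · -- 0 < t ≤ 1 : g antitone on [t, 1]
    have hanti : AntitoneOn g (Set.Icc t 1) := by
      apply antitoneOn_of_deriv_nonpos (convex_Icc t 1)
      · exact fun s hs => ((hd s (lt_of_lt_of_le ht hs.1)).continuousAt).continuousWithinAt
      · rw [interior_Icc]
        exact fun s hs =>
          ((hd s (lt_of_lt_of_le ht (le_of_lt hs.1))).differentiableAt).differentiableWithinAt
      · rw [interior_Icc]
        intro s hs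
        have hs0 : 0 < s := lt_of_lt_of_le ht (le_of_lt hs.1)
        rw [(hd s hs0).deriv]
        have := hg'mono (Set.mem_Ioi.2 hs0) (Set.mem_Ioi.2 one_pos) (le_of_lt hs.2)
        rw [hg'one] at this
        exact this
    have := hanti (Set.mem_Icc.2 ⟨le_rfl, ht1⟩) (Set.mem_Icc.2 ⟨ht1, le_rfl⟩) ht1
    rw [hgone] at this
    exact this

private lemma pikl_pinsker_scalar {p q : ℝ} (hp : 0 ≤ p) (hq : 0 < q) :
    3*(p-q)^2/(2*(p+2*q)) ≤ p * Real.log (p/q) - p + q := by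
  have hden : (0:ℝ) < 2*(p+2*q) := by linarith
  rcases hp.eq_or_lt with h0 | hp0
  · rw [← h0]
    have : 3*((0:ℝ)-q)^2/(2*(0+2*q)) = 3/4*q := by field_simp; ring
    rw [this]
    simp only [zero_mul, zero_sub, zero_add]
    linarith
  · set t := p / q with htdef
    have ht : 0 < t := div_pos hp0 hq
    have hG := pikl_G_nonneg ht
    have hG' : 3*(t-1)^2 ≤ 2*(t+2)*(t*Real.log t - t + 1) := by linarith
    rw [div_le_iff₀ hden]
    calc 3*(p-q)^2 = q^2 * (3*(t-1)^2) := by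
          rw [htdef]; field_simp
      _ ≤ q^2 * (2*(t+2)*(t*Real.log t - t + 1)) := by
          apply mul_le_mul_of_nonneg_left hG' (sq_nonneg q)
      _ = (p * Real.log (p/q) - p + q) * (2*(p+2*q)) := by
          rw [htdef]; field_simp

private lemma pikl_harmonic : ∀ m : ℕ, 2 ≤ m →
    1/2 + ∑ k ∈ Finset.range m, (1:ℝ)/(k+1) ≤ 2*Real.log (m+1) := by
  intro m hm
  induction m, hm using Nat.le_induction with
  | base =>
    have h3 : (1:ℝ) ≤ Real.log 3 := by
      rw [Real.le_log_iff_exp_le (by norm_num)]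
      exact (Real.exp_one_lt_d9.le.trans (by norm_num))
    have : ∑ k ∈ Finset.range 2, (1:ℝ)/(k+1) = 1 + 1/2 := by
      norm_num [Finset.sum_range_succ]
    rw [this]
    have : ((2:ℕ):ℝ) + 1 = 3 := by norm_num
    rw [this]
    linarith
  | succ m hm ih =>
    rw [Finset.sum_range_succ]
    have hm2 : (2:ℝ) ≤ (m:ℝ) := by exact_mod_cast hm
    have hpos1 : (0:ℝ) < (m:ℝ) + 1 := by linarith
    have hpos2 : (0:ℝ) < (m:ℝ) + 2 := by linarith
    have hlog : Real.log ((m+2:ℝ)/(m+1)) = Real.log ((m:ℝ)+2) - Real.log ((m:ℝ)+1) :=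
      Real.log_div (ne_of_gt hpos2) (ne_of_gt hpos1)
    have hlb : 1 - (((m:ℝ)+2)/((m:ℝ)+1))⁻¹ ≤ Real.log (((m:ℝ)+2)/((m:ℝ)+1)) :=
      Real.one_sub_inv_le_log_of_pos (div_pos hpos2 hpos1)
    have hinv : (((m:ℝ)+2)/((m:ℝ)+1))⁻¹ = ((m:ℝ)+1)/((m:ℝ)+2) := by
      rw [inv_div]
    have h1 : 1 - ((m:ℝ)+1)/((m:ℝ)+2) = 1/((m:ℝ)+2) := by
      field_simp
      norm_num
    have hstep : (1:ℝ)/((m:ℝ)+1) ≤ 2*(Real.log ((m:ℝ)+2) - Real.log ((m:ℝ)+1)) := by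
      rw [← hlog]
      have h2 : (1:ℝ)/((m:ℝ)+1) ≤ 2*(1/((m:ℝ)+2)) := by
        rw [show (2:ℝ)*(1/((m:ℝ)+2)) = 2/((m:ℝ)+2) by ring, div_le_div_iff₀ hpos1 hpos2]
        nlinarith
      calc (1:ℝ)/((m:ℝ)+1) ≤ 2*(1/((m:ℝ)+2)) := h2
        _ ≤ 2*Real.log (((m:ℝ)+2)/((m:ℝ)+1)) := by
            apply mul_le_mul_of_nonneg_left _ (by norm_num)
            rw [← h1, ← hinv]; exact hlb
    have hcast : ((m+1:ℕ):ℝ) + 1 = (m:ℝ) + 2 := by push_cast; ring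
    rw [hcast]
    have hcast2 : ((m:ℕ):ℝ) + 1 = (m:ℝ)+1 := rfl
    have : (1:ℝ)/((m:ℕ):ℝ ) = 1/(m:ℝ) := rfl
    push_cast
    push_cast at ih
    linarith

section piklAux

variable {A : Type*} [Fintype A] [Nonempty A]

private lemma pikl_entropy_nonpos {y : A → ℝ} (hy : y ∈ simplex A) :
    ∑ a, y a * Real.log (y a) ≤ 0 := by
  apply Finset.sum_nonpos
  intro a _
  have h1 : y a ≤ 1 := by
    rw [← hy.2]
    exact Finset.single_le_sum (fun i _ => hy.1 i) (Finset.mem_univ a)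
  exact mul_nonpos_of_nonneg_of_nonpos (hy.1 a) (Real.log_nonpos (hy.1 a) h1)

private lemma pikl_KL_expand {y τ : A → ℝ} (hτ : ∀ a, 0 < τ a) :
    KL y τ = ∑ a, y a * Real.log (y a) - ∑ a, y a * Real.log (τ a) := by
  rw [← Finset.sum_sub_distrib]
  unfold KL
  apply Finset.sum_congr rfl
  intro a _
  rcases eq_or_ne (y a) 0 with h | h
  · simp [h]
  · rw [Real.log_div h (ne_of_gt (hτ a))]; ring

private lemma pikl_KL_self {q : A → ℝ} (hq : ∀ a, 0 < q a) : KL q q = 0 := by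
  unfold KL
  apply Finset.sum_eq_zero
  intro a _
  rw [div_self (ne_of_gt (hq a)), Real.log_one, mul_zero]

private lemma pikl_KL_nonneg {y q : A → ℝ} (hy : y ∈ simplex A)
    (hq1 : ∑ a, q a = 1) (hqpos : ∀ a, 0 < q a) : 0 ≤ KL y q := by
  have h : ∀ a ∈ Finset.univ (α := A), y a - q a ≤ y a * Real.log (y a / q a) := by
    intro a _
    rcases (hy.1 a).eq_or_lt with h0 | h0
    · rw [← h0]; simp; exact (hqpos a).le
    · have hlog : Real.log (q a / y a) ≤ q a / y a - 1 :=
        Real.log_le_sub_one_of_pos (div_pos (hqpos a) h0)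
      have hlog2 : 1 - q a / y a ≤ Real.log (y a / q a) := by
        rw [show Real.log (y a / q a) = - Real.log (q a / y a) by rw [← Real.log_inv, inv_div]]
        linarith
      calc y a - q a = y a * (1 - q a / y a) := by field_simp
        _ ≤ y a * Real.log (y a / q a) := mul_le_mul_of_nonneg_left hlog2 h0.le
  calc (0:ℝ) = ∑ a, (y a - q a) := by rw [Finset.sum_sub_distrib, hy.2, hq1, sub_self]
    _ ≤ KL y q := Finset.sum_le_sum h

private lemma pikl_phi_eq (G : A → ℝ) (c : ℝ) (hc : 0 < c) {y : A → ℝ} (hy : y ∈ simplex A) :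
    (∑ a, G a * y a) - c * ∑ a, y a * Real.log (y a)
      = c * Real.log (∑ b, Real.exp (G b / c))
        - c * KL y (fun a => Real.exp (G a / c) / ∑ b, Real.exp (G b / c)) := by
  set Z := ∑ b, Real.exp (G b / c) with hZdef
  have hZ : 0 < Z := Finset.sum_pos (fun b _ => Real.exp_pos _) Finset.univ_nonempty
  have hterm : ∀ a, y a * Real.log (y a / (Real.exp (G a / c) / Z))
      = y a * Real.log (y a) - y a * (G a / c) + y a * Real.log Z := by
    intro a
    rcases eq_or_ne (y a) 0 with h | h
    · simp [h]
    · rw [Real.log_div h (by positivity),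
        Real.log_div (ne_of_gt (Real.exp_pos _)) (ne_of_gt hZ), Real.log_exp]
      ring
  have hKL : KL y (fun a => Real.exp (G a / c) / Z)
      = (∑ a, y a * Real.log (y a)) - (∑ a, G a * y a)/c + Real.log Z := by
    unfold KL
    rw [Finset.sum_congr rfl (fun a _ => hterm a)]
    rw [Finset.sum_add_distrib, Finset.sum_sub_distrib, ← Finset.sum_mul, hy.2, one_mul]
    congr 1
    rw [Finset.sum_div]
    congr 1
    apply Finset.sum_congr rfl
    intro a _
    ring
  rw [hKL]
  field_simp
  ring

private lemma pikl_pinsker {p q : A → ℝ} (hp : p ∈ simplex A) (hq : q ∈ simplex A)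
    (hqpos : ∀ a, 0 < q a) : (∑ a, |p a - q a|)^2 ≤ 2 * KL p q := by
  have hg : ∀ a ∈ Finset.univ (α := A), 0 < 2*(p a + 2*q a)/3 := by
    intro a _
    have := hp.1 a; have := hqpos a
    positivity
  have hsed := Finset.sq_sum_div_le_sum_sq_div Finset.univ
    (fun a => |p a - q a|) hg
  have hgsum : ∑ a, 2*(p a + 2*q a)/3 = 2 := by
    have e1 : ∑ a, 2*(p a + 2*q a) = 2*(∑ a, p a) + 4*(∑ a, q a) := by
      simp only [mul_add, Finset.sum_add_distrib, ← Finset.mul_sum]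
      ring
    rw [← Finset.sum_div, e1, hp.2, hq.2]
    norm_num
  have hterm : ∀ a ∈ Finset.univ (α := A),
      |p a - q a|^2 / (2*(p a + 2*q a)/3) ≤ p a * Real.log (p a / q a) - p a + q a := by
    intro a _
    have h1 : |p a - q a|^2 / (2*(p a + 2*q a)/3) = 3*(p a - q a)^2/(2*(p a + 2*q a)) := by
      rw [sq_abs, div_div_eq_mul_div]
      ring
    rw [h1]
    exact pikl_pinsker_scalar (hp.1 a) (hqpos a)
  have hsum : ∑ a, (p a * Real.log (p a / q a) - p a + q a) = KL p q := by
    unfold KL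
    rw [Finset.sum_add_distrib, Finset.sum_sub_distrib, hp.2, hq.2]
    ring
  have h2 : (∑ a, |p a - q a|)^2 / 2 ≤ KL p q := by
    calc (∑ a, |p a - q a|)^2 / 2 = (∑ a, |p a - q a|)^2 / ∑ a, 2*(p a + 2*q a)/3 := by
          rw [hgsum]
      _ ≤ ∑ a, |p a - q a|^2 / (2*(p a + 2*q a)/3) := hsed
      _ ≤ ∑ a, (p a * Real.log (p a / q a) - p a + q a) := Finset.sum_le_sum hterm
      _ = KL p q := hsum
  linarith

/-- softmax is a positive element of the simplex -/
private lemma pikl_sm_pos (w : A → ℝ) :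
    ∀ a, 0 < Real.exp (w a) / ∑ b, Real.exp (w b) := by
  intro a
  exact div_pos (Real.exp_pos _) (Finset.sum_pos (fun b _ => Real.exp_pos _) Finset.univ_nonempty)

private lemma pikl_sm_mem (w : A → ℝ) :
    (fun a => Real.exp (w a) / ∑ b, Real.exp (w b)) ∈ simplex A := by
  constructor
  · exact fun a => (pikl_sm_pos w a).le
  · rw [← Finset.sum_div]
    exact div_self (ne_of_gt (Finset.sum_pos (fun b _ => Real.exp_pos _) Finset.univ_nonempty))

/-- one-step stability bound via Pinsker + AM-GM -/
private lemma pikl_ip_diff_le {v P Q : A → ℝ} (hP : P ∈ simplex A) (hQ : Q ∈ simplex A)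
    (hQpos : ∀ a, 0 < Q a) {U γ : ℝ} (hUv : ∀ a, |v a| ≤ U) (hγ : 0 < γ) :
    ip v P - ip v Q ≤ U^2/(2*γ) + γ * KL P Q := by
  have hU0 : 0 ≤ U := le_trans (abs_nonneg _) (hUv (Classical.arbitrary A))
  set L := ∑ a, |P a - Q a| with hL
  have hL0 : 0 ≤ L := Finset.sum_nonneg (fun a _ => abs_nonneg _)
  have h1 : ip v P - ip v Q ≤ U * L := by
    unfold ip
    rw [← Finset.sum_sub_distrib, hL, Finset.mul_sum]
    apply Finset.sum_le_sum
    intro a _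
    calc v a * P a - v a * Q a = v a * (P a - Q a) := by ring
      _ ≤ |v a * (P a - Q a)| := le_abs_self _
      _ = |v a| * |P a - Q a| := abs_mul _ _
      _ ≤ U * |P a - Q a| := mul_le_mul_of_nonneg_right (hUv a) (abs_nonneg _)
  have h2 : L^2 ≤ 2 * KL P Q := pikl_pinsker hP hQ hQpos
  have h3 : U * L ≤ U^2/(2*γ) + γ * L^2 / 2 := by
    have h4 : U^2/(2*γ) + γ*L^2/2 - U*L = (U - γ*L)^2/(2*γ) := by field_simp; ring
    have h5 : 0 ≤ (U - γ*L)^2/(2*γ) := div_nonneg (sq_nonneg _) (by linarith)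
    linarith
  calc ip v P - ip v Q ≤ U * L := h1
    _ ≤ U^2/(2*γ) + γ * L^2 / 2 := h3
    _ ≤ U^2/(2*γ) + γ * KL P Q := by nlinarith [hγ.le]

private lemma pikl_sum_Icc_shift (F : ℕ → ℝ) (T : ℕ) :
    ∑ t ∈ Finset.Icc 1 T, F t = ∑ k ∈ Finset.range T, F (k+1) := by
  induction T with
  | zero => simp
  | succ n ih =>
    rw [Finset.sum_Icc_succ_top (Nat.succ_le_succ (Nat.zero_le n)), ih,
      Finset.sum_range_succ]

end piklAux

set_option maxHeartbeats 2000000 in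
/-- logarithmic cumulative regret of piKL with respect to the regularized
utilities `ũ_λ(x; u) := ⟨u, x⟩ − λ D_KL(x‖τ)`: if `‖u^t‖_∞ ≤ U` for all `t`, then for
every `T ≥ 3` and every comparator `π ∈ Δ(A)`,
`∑_{t=1}^T [ũ_λ(π; u^t) − ũ_λ(x^t; u^t)]
   ≤ (U²/2)·min{2 log T/λ, Tη} + (log n)/η + λ(log n + Q)`,
where `n = |A|` and `Q = −(1/n)∑_a log τ(a)`. -/
theorem pikl_cumulative_regret_bound
    {A : Type*} [Fintype A] [Nonempty A]
    (τ : A → ℝ) (hτ : τ ∈ simplex A) (hτpos : ∀ a, 0 < τ a)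
    (lam η : ℝ) (hlam : 0 < lam) (hη : 0 < η)
    (u : ℕ → A → ℝ) (U : ℝ)
    (hU : ∀ t : ℕ, 1 ≤ t → supNorm (u t) ≤ U)
    (x : ℕ → A → ℝ)
    (hx1 : ∀ a, x 1 a = (Fintype.card A : ℝ)⁻¹)
    (hxsucc : ∀ t, 1 ≤ t → ∀ a : A,
      x (t + 1) a =
        Real.exp ((((t : ℝ)⁻¹ * ∑ s ∈ Finset.Icc 1 t, u s a) + lam * Real.log (τ a))
            / (lam + 1 / (η * t)))
        / ∑ b, Real.exp ((((t : ℝ)⁻¹ * ∑ s ∈ Finset.Icc 1 t, u s b) + lam * Real.log (τ b))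
            / (lam + 1 / (η * t)))) :
    ∀ T : ℕ, 3 ≤ T → ∀ p ∈ simplex A,
      ∑ t ∈ Finset.Icc 1 T,
          ((ip (u t) p - lam * KL p τ) - (ip (u t) (x t) - lam * KL (x t) τ))
        ≤ U ^ 2 / 2 * min (2 * Real.log T / lam) ((T : ℝ) * η)
          + Real.log (Fintype.card A) / η
          + lam * (Real.log (Fintype.card A)
              + (-(Fintype.card A : ℝ)⁻¹ * ∑ a, Real.log (τ a))) := by
  intro T hT p hp
  have hηinv : (0:ℝ) < 1/η := by positivity
  have hcard1 : 1 ≤ Fintype.card A := Fintype.card_pos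
  have hn : (0:ℝ) < (Fintype.card A : ℝ) := by exact_mod_cast Fintype.card_pos
  have hlogn : 0 ≤ Real.log (Fintype.card A) := Real.log_nonneg (by exact_mod_cast hcard1)
  have hUbd : ∀ t, 1 ≤ t → ∀ a, |u t a| ≤ U := by
    intro t ht a
    exact le_trans (Finset.le_sup' (fun a => |u t a|) (Finset.mem_univ a)) (hU t ht)
  have hU0 : 0 ≤ U := le_trans (abs_nonneg _) (hUbd 1 le_rfl (Classical.arbitrary A))
  have hU2 : (0:ℝ) ≤ U^2 := sq_nonneg U
  -- opaque local definitions
  obtain ⟨G, hGdef⟩ : ∃ G : ℕ → A → ℝ,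
      G = fun t a => (∑ s ∈ Finset.Icc 1 t, u s a) + lam * t * Real.log (τ a) := ⟨_, rfl⟩
  obtain ⟨c, hcdef⟩ : ∃ c : ℕ → ℝ, c = fun t : ℕ => lam * (t:ℝ) + 1/η := ⟨_, rfl⟩
  obtain ⟨X, hXdef⟩ : ∃ X : ℕ → A → ℝ,
      X = fun t a => Real.exp (G t a / c t) / ∑ b, Real.exp (G t b / c t) := ⟨_, rfl⟩
  obtain ⟨Phi, hPhidef⟩ : ∃ Phi : ℕ → (A → ℝ) → ℝ,
      Phi = fun t y => (∑ a, G t a * y a) - c t * ∑ a, y a * Real.log (y a) := ⟨_, rfl⟩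
  have hceq : ∀ t : ℕ, c t = lam * (t:ℝ) + 1/η := fun t => by rw [hcdef]
  have hc : ∀ t : ℕ, 0 < c t := by
    intro t
    rw [hceq t]
    have h1 : (0:ℝ) ≤ lam * t := by positivity
    linarith
  have hclb : ∀ t : ℕ, 1/η ≤ c t := by
    intro t
    rw [hceq t]
    have h1 : (0:ℝ) ≤ lam * t := by positivity
    linarith
  have hXeq : ∀ t, X t = fun a => Real.exp (G t a / c t) / ∑ b, Real.exp (G t b / c t) :=
    fun t => by rw [hXdef]
  have hXmem : ∀ t, X t ∈ simplex A := fun t => by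
    rw [hXeq t]; exact pikl_sm_mem (fun b => G t b / c t)
  have hXpos : ∀ t, ∀ a, 0 < X t a := fun t a => by
    simp only [hXeq t]; exact pikl_sm_pos (fun b => G t b / c t) a
  have hPhieq : ∀ t y, Phi t y = (∑ a, G t a * y a) - c t * ∑ a, y a * Real.log (y a) :=
    fun t y => by rw [hPhidef]
  have hG0 : ∀ a, G 0 a = 0 := by
    intro a
    simp only [hGdef]
    rw [Finset.Icc_eq_empty (by omega : ¬(1:ℕ) ≤ 0), Finset.sum_empty]
    push_cast
    ring
  -- identity: Phi t y = Phi t (X t) - c t * KL y (X t)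
  have hPhiX : ∀ t, ∀ y ∈ simplex A, Phi t y = Phi t (X t) - c t * KL y (X t) := by
    intro t y hy
    have h1 := pikl_phi_eq (G t) (c t) (hc t) hy
    have h2 := pikl_phi_eq (G t) (c t) (hc t) (pikl_sm_mem (fun a => G t a / c t))
    have hzero : KL (fun a => Real.exp (G t a / c t) / ∑ b, Real.exp (G t b / c t))
        (fun a => Real.exp (G t a / c t) / ∑ b, Real.exp (G t b / c t)) = 0 :=
      pikl_KL_self (fun a => pikl_sm_pos (fun b => G t b / c t) a)
    rw [hzero, mul_zero, sub_zero] at h2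
    rw [hPhieq t y, hPhieq t (X t), hXeq t, h1, h2]
  -- recursion: Phi (t+1) y - Phi t y = ip (u (t+1)) y - lam * KL y τ
  have hPhiSucc : ∀ t : ℕ, ∀ y ∈ simplex A,
      Phi (t+1) y - Phi t y = ip (u (t+1)) y - lam * KL y τ := by
    intro t y hy
    have hGdiff : ∀ a, G (t+1) a - G t a = u (t+1) a + lam * Real.log (τ a) := by
      intro a
      simp only [hGdef]
      rw [Finset.sum_Icc_succ_top (Nat.succ_le_succ (Nat.zero_le t))]
      push_cast
      ring
    have hcd : c (t+1) - c t = lam := by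
      rw [hceq (t+1), hceq t]
      push_cast
      ring
    have e1 : ∑ a, (u (t+1) a + lam * Real.log (τ a)) * y a
        = ip (u (t+1)) y + lam * ∑ a, y a * Real.log (τ a) := by
      unfold ip
      rw [Finset.mul_sum, ← Finset.sum_add_distrib]
      apply Finset.sum_congr rfl
      intro a _
      ring
    have e3 : ∑ a, (G (t+1) a - G t a) * y a
        = (∑ a, G (t+1) a * y a) - ∑ a, G t a * y a := by
      rw [← Finset.sum_sub_distrib]
      apply Finset.sum_congr rfl
      intro a _
      ring
    have e2 : ∑ a, (G (t+1) a - G t a) * y a = ∑ a, (u (t+1) a + lam * Real.log (τ a)) * y a :=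
      Finset.sum_congr rfl (fun a _ => by rw [hGdiff a])
    have e4 : (∑ a, G (t+1) a * y a) - ∑ a, G t a * y a
        = ip (u (t+1)) y + lam * ∑ a, y a * Real.log (τ a) := by
      rw [← e3, e2, e1]
    have hKLy : KL y τ = ∑ a, y a * Real.log (y a) - ∑ a, y a * Real.log (τ a) :=
      pikl_KL_expand hτpos
    rw [hPhieq (t+1) y, hPhieq t y, hKLy]
    linear_combination e4 - (∑ a, y a * Real.log (y a)) * hcd
  -- x (k+1) = X k
  have hxX : ∀ k : ℕ, x (k+1) = X k := by
    intro k
    funext a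
    rw [hXeq k]
    rcases Nat.eq_zero_or_pos k with hk | hk
    · subst hk
      rw [hx1 a]
      have h1 : ∀ b, Real.exp (G 0 b / c 0) = 1 := by
        intro b
        rw [hG0 b, zero_div, Real.exp_zero]
      simp only
      rw [h1 a, Finset.sum_congr rfl (fun b _ => h1 b), Finset.sum_const,
        Finset.card_univ, nsmul_eq_mul, mul_one, one_div]
    · have hk1 : (1:ℕ) ≤ k := hk
      have hkR : (0:ℝ) < (k:ℝ) := by exact_mod_cast hk
      have hd1 : (0:ℝ) < lam + 1/(η*(k:ℝ)) := by positivity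
      have harg : ∀ b, (((k:ℝ)⁻¹ * ∑ s ∈ Finset.Icc 1 k, u s b) + lam * Real.log (τ b))
          / (lam + 1/(η*(k:ℝ))) = G k b / c k := by
        intro b
        simp only [hGdef, hcdef]
        rw [div_eq_div_iff (ne_of_gt hd1) (by
          have h1 : (0:ℝ) ≤ lam * (k:ℝ) := by positivity
          have : (0:ℝ) < lam * (k:ℝ) + 1/η := by linarith
          exact ne_of_gt this)]
        field_simp
      rw [hxsucc k hk1 a, harg a]
      congr 1
      exact Finset.sum_congr rfl (fun b _ => by rw [harg b])
  have hX0 : ∀ a, X 0 a = (Fintype.card A : ℝ)⁻¹ := by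
    intro a
    rw [← hxX 0]
    exact hx1 a
  -- uniform entropy
  have hentunif : ∑ a, X 0 a * Real.log (X 0 a) = - Real.log (Fintype.card A) := by
    rw [Finset.sum_congr rfl (fun a _ => by rw [hX0 a])]
    rw [Finset.sum_const, Finset.card_univ, nsmul_eq_mul, Real.log_inv]
    rw [show ((Fintype.card A:ℝ)) * ((Fintype.card A:ℝ)⁻¹ * -Real.log (Fintype.card A))
      = ((Fintype.card A:ℝ) * (Fintype.card A:ℝ)⁻¹) * -Real.log (Fintype.card A) from by ring]
    rw [mul_inv_cancel₀ (ne_of_gt hn), one_mul]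
  obtain ⟨Q', hQdef⟩ : ∃ q : ℝ, q = -(Fintype.card A : ℝ)⁻¹ * ∑ a, Real.log (τ a) := ⟨_, rfl⟩
  obtain ⟨D, hDdef⟩ : ∃ D : ℕ → ℝ, D = fun k => KL (X (k+1)) (X k) := ⟨_, rfl⟩
  obtain ⟨R, hRdef⟩ : ∃ R : ℕ → ℝ, R = fun k => KL (X k) τ := ⟨_, rfl⟩
  have hReq : ∀ k, R k = KL (X k) τ := fun k => by rw [hRdef]
  have hDeq : ∀ k, D k = KL (X (k+1)) (X k) := fun k => by rw [hDdef]
  have hR0 : R 0 = Q' - Real.log (Fintype.card A) := by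
    rw [hReq 0, pikl_KL_expand hτpos, hentunif]
    have h1 : ∑ a, X 0 a * Real.log (τ a) = (Fintype.card A:ℝ)⁻¹ * ∑ a, Real.log (τ a) := by
      rw [Finset.mul_sum]
      exact Finset.sum_congr rfl (fun a _ => by rw [hX0 a])
    rw [h1, hQdef]
    ring
  have hRnonneg : ∀ k, 0 ≤ R k := fun k => by
    rw [hReq k]; exact pikl_KL_nonneg (hXmem k) hτ.2 hτpos
  have hDnonneg : ∀ k, 0 ≤ D k := fun k => by
    rw [hDeq k]; exact pikl_KL_nonneg (hXmem (k+1)) (hXmem k).2 (hXpos k)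
  have hD0 : D 0 ≤ Real.log (Fintype.card A) := by
    rw [hDeq 0, pikl_KL_expand (hXpos 0)]
    have h1 : ∑ a, X 1 a * Real.log (X 0 a) = - Real.log (Fintype.card A) := by
      have h2 : ∀ a, X 1 a * Real.log (X 0 a) = X 1 a * (- Real.log (Fintype.card A)) := by
        intro a
        rw [hX0 a, Real.log_inv]
      rw [Finset.sum_congr rfl (fun a _ => h2 a), ← Finset.sum_mul, (hXmem 1).2, one_mul]
    rw [h1]
    have := pikl_entropy_nonpos (hXmem 1)
    linarith
  -- stability bound
  have hstab : ∀ k : ℕ, ∀ γ : ℝ, 0 < γ →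
      ip (u (k+1)) (X (k+1)) - ip (u (k+1)) (X k) ≤ U^2/(2*γ) + γ * D k := by
    intro k γ hγ
    rw [hDeq k]
    exact pikl_ip_diff_le (hXmem (k+1)) (hXmem k) (hXpos k)
      (hUbd (k+1) (Nat.succ_le_succ (Nat.zero_le k))) hγ
  -- the per-step quantity
  obtain ⟨E, hEdef⟩ : ∃ E : ℕ → ℝ, E = fun k =>
      ip (u (k+1)) (X (k+1)) - ip (u (k+1)) (X k) + lam * (R k - R (k+1)) - c k * D k :=
    ⟨_, rfl⟩
  have hEeq : ∀ k, E k = ip (u (k+1)) (X (k+1)) - ip (u (k+1)) (X k)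
      + lam * (R k - R (k+1)) - c k * D k := fun k => by rw [hEdef]
  -- base inequality
  have base : ∑ t ∈ Finset.Icc 1 T,
        ((ip (u t) p - lam * KL p τ) - (ip (u t) (x t) - lam * KL (x t) τ))
      ≤ Real.log (Fintype.card A)/η + ∑ k ∈ Finset.range T, E k := by
    rw [pikl_sum_Icc_shift
      (fun t => ((ip (u t) p - lam * KL p τ) - (ip (u t) (x t) - lam * KL (x t) τ))) T]
    simp only [hxX]
    have hA : ∑ k ∈ Finset.range T, (ip (u (k+1)) p - lam * KL p τ) = Phi T p - Phi 0 p := by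
      rw [← Finset.sum_range_sub (fun k => Phi k p) T]
      exact Finset.sum_congr rfl (fun k _ => (hPhiSucc k p hp).symm)
    have hPhi0p : 0 ≤ Phi 0 p := by
      rw [hPhieq 0 p]
      have h0 : ∑ a, G 0 a * p a = 0 :=
        Finset.sum_eq_zero (fun a _ => by rw [hG0 a, zero_mul])
      have h1 := pikl_entropy_nonpos hp
      have h2 : c 0 * ∑ a, p a * Real.log (p a) ≤ 0 :=
        mul_nonpos_of_nonneg_of_nonpos (hc 0).le h1
      linarith
    have hB : Phi T p ≤ Phi T (X T) := by
      rw [hPhiX T p hp]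
      have h1 : 0 ≤ c T * KL p (X T) :=
        mul_nonneg (hc T).le (pikl_KL_nonneg hp (hXmem T).2 (hXpos T))
      linarith
    have hterm : ∀ k : ℕ, Phi (k+1) (X (k+1)) - Phi k (X k)
        = ip (u (k+1)) (X (k+1)) - lam * R (k+1) - c k * D k := by
      intro k
      have h1 := hPhiSucc k (X (k+1)) (hXmem (k+1))
      have h2 := hPhiX k (X (k+1)) (hXmem (k+1))
      rw [hReq (k+1), hDeq k]
      linear_combination h1 + h2
    have hPhi00 : Phi 0 (X 0) = Real.log (Fintype.card A) / η := by
      rw [hPhieq 0 (X 0)]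
      have h0 : ∑ a, G 0 a * X 0 a = 0 :=
        Finset.sum_eq_zero (fun a _ => by rw [hG0 a, zero_mul])
      have hc0 : c 0 = 1/η := by
        rw [hceq 0]
        push_cast
        ring
      rw [h0, hentunif, hc0]
      field_simp
      ring
    have hC : Phi T (X T) = Real.log (Fintype.card A)/η
        + ∑ k ∈ Finset.range T, (ip (u (k+1)) (X (k+1)) - lam * R (k+1) - c k * D k) := by
      rw [← Finset.sum_congr rfl (fun k _ => hterm k),
        Finset.sum_range_sub (fun k => Phi k (X k)), hPhi00]
      ring
    rw [Finset.sum_sub_distrib]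
    have hsplit : ∑ k ∈ Finset.range T, E k
        = (∑ k ∈ Finset.range T, (ip (u (k+1)) (X (k+1)) - lam * R (k+1) - c k * D k))
          - ∑ k ∈ Finset.range T, (ip (u (k+1)) (X k) - lam * R k) := by
      rw [← Finset.sum_sub_distrib]
      apply Finset.sum_congr rfl
      intro k _
      rw [hEeq k]
      ring
    have hXk : ∑ k ∈ Finset.range T, (ip (u (k+1)) (X k) - lam * KL (X k) τ)
        = ∑ k ∈ Finset.range T, (ip (u (k+1)) (X k) - lam * R k) :=
      Finset.sum_congr rfl (fun k _ => by rw [hReq k])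
    rw [hXk, hA]
    linarith [hsplit, hC, hB, hPhi0p]
  -- branch η
  have branch_eta : ∑ k ∈ Finset.range T, E k
      ≤ U^2/2 * ((T:ℝ)*η) + lam * (R 0 - R T) := by
    have hstep : ∀ k ∈ Finset.range T, E k ≤ U^2*η/2 + lam * (R k - R (k+1)) := by
      intro k _
      have h1 := hstab k (c k) (hc k)
      have h2 : U^2/(2*c k) ≤ U^2*η/2 := by
        rw [div_le_iff₀ (by have := hc k; linarith : (0:ℝ) < 2 * c k)]
        have h5 : 1 ≤ η * c k := by
          rw [show (1:ℝ) = η * (1/η) from by field_simp]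
          exact mul_le_mul_of_nonneg_left (hclb k) hη.le
        nlinarith
      have h6 : 0 ≤ c k * D k := mul_nonneg (hc k).le (hDnonneg k)
      rw [hEeq k]
      linarith
    calc ∑ k ∈ Finset.range T, E k
        ≤ ∑ k ∈ Finset.range T, (U^2*η/2 + lam * (R k - R (k+1))) := Finset.sum_le_sum hstep
      _ = (T:ℝ) * (U^2*η/2) + lam * (R 0 - R T) := by
          rw [Finset.sum_add_distrib, Finset.sum_const, Finset.card_range, nsmul_eq_mul]
          rw [← Finset.mul_sum, Finset.sum_range_sub' (fun k => R k)]
      _ = U^2/2 * ((T:ℝ)*η) + lam * (R 0 - R T) := by ring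
  -- branch log
  have branch_log : ∑ k ∈ Finset.range T, E k
      ≤ U^2/2 * (2 * Real.log T / lam) + 2 * lam * Real.log (Fintype.card A)
        + lam * (R 0 - R T) := by
    obtain ⟨M, rfl⟩ : ∃ M, T = M + 3 := ⟨T - 3, by omega⟩
    rw [show M + 3 = (M + 2) + 1 from rfl, Finset.sum_range_succ' E (M+2)]
    have hE0 : E 0 ≤ U^2/(2*lam) * (1/2) + 2*lam*(Real.log (Fintype.card A))
        + lam * (R 0 - R 1) := by
      have hγ0 : (0:ℝ) < 2*lam + 1/η := by positivity
      have h1 := hstab 0 (2*lam + 1/η) hγ0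
      have hc0 : c 0 = 1/η := by
        rw [hceq 0]; push_cast; ring
      have h2 : U^2/(2*(2*lam + 1/η)) ≤ U^2/(2*lam) * (1/2) := by
        rw [show U^2/(2*lam) * (1/2) = U^2/(4*lam) from by ring]
        apply div_le_div_of_nonneg_left hU2 (by positivity)
        linarith
      have h3 : (2*lam + 1/η) * D 0 - c 0 * D 0 = 2*lam * D 0 := by
        rw [hc0]; ring
      have h4 : 2*lam*D 0 ≤ 2*lam*Real.log (Fintype.card A) :=
        mul_le_mul_of_nonneg_left hD0 (by positivity)
      rw [hEeq 0]
      linarith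
    have hEk : ∀ k ∈ Finset.range (M+2), E (k+1)
        ≤ U^2/(2*lam) * (1/((k:ℝ)+1)) + lam * (R (k+1) - R (k+1+1)) := by
      intro k _
      have h1 := hstab (k+1) (c (k+1)) (hc (k+1))
      have hck : lam * ((k:ℝ)+1) ≤ c (k+1) := by
        rw [hceq (k+1)]
        push_cast
        linarith
      have h2 : U^2/(2*c (k+1)) ≤ U^2/(2*lam) * (1/((k:ℝ)+1)) := by
        rw [show U^2/(2*lam) * (1/((k:ℝ)+1)) = U^2/(2*lam*((k:ℝ)+1)) from by
          field_simp]
        apply div_le_div_of_nonneg_left hU2 (by positivity)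
        linarith
      have h5 : 0 ≤ c (k+1) * D (k+1) := mul_nonneg (hc (k+1)).le (hDnonneg (k+1))
      rw [hEeq (k+1)]
      linarith
    have hsum1 : ∑ k ∈ Finset.range (M+2), E (k+1)
        ≤ U^2/(2*lam) * (∑ k ∈ Finset.range (M+2), 1/((k:ℝ)+1))
          + lam * (R 1 - R (M+2+1)) := by
      calc ∑ k ∈ Finset.range (M+2), E (k+1)
          ≤ ∑ k ∈ Finset.range (M+2),
              (U^2/(2*lam) * (1/((k:ℝ)+1)) + lam * (R (k+1) - R (k+1+1))) :=
            Finset.sum_le_sum hEk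
        _ = U^2/(2*lam) * (∑ k ∈ Finset.range (M+2), 1/((k:ℝ)+1))
            + lam * (R 1 - R (M+2+1)) := by
            rw [Finset.sum_add_distrib, ← Finset.mul_sum, ← Finset.mul_sum,
              Finset.sum_range_sub' (fun k => R (k+1))]
    have hharm := pikl_harmonic (M+2) (by omega)
    have hcomb : U^2/(2*lam) * (1/2) + U^2/(2*lam) * (∑ k ∈ Finset.range (M+2), 1/((k:ℝ)+1))
        ≤ U^2/2 * (2 * Real.log ((M+3:ℕ):ℝ) / lam) := by
      have h7 : 1/2 + ∑ k ∈ Finset.range (M+2), 1/((k:ℝ)+1) ≤ 2*Real.log ((M+3:ℕ):ℝ) := by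
        push_cast at hharm ⊢
        convert hharm using 3
        ring
      calc U^2/(2*lam) * (1/2) + U^2/(2*lam) * (∑ k ∈ Finset.range (M+2), 1/((k:ℝ)+1))
          = U^2/(2*lam) * (1/2 + ∑ k ∈ Finset.range (M+2), 1/((k:ℝ)+1)) := by ring
        _ ≤ U^2/(2*lam) * (2*Real.log ((M+3:ℕ):ℝ)) := by
            apply mul_le_mul_of_nonneg_left h7 (by positivity)
        _ = U^2/2 * (2 * Real.log ((M+3:ℕ):ℝ) / lam) := by
            field_simp
    calc ∑ k ∈ Finset.range (M+2), E (k+1) + E 0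
        ≤ (U^2/(2*lam) * (∑ k ∈ Finset.range (M+2), 1/((k:ℝ)+1)) + lam * (R 1 - R (M+2+1)))
          + (U^2/(2*lam) * (1/2) + 2*lam*(Real.log (Fintype.card A)) + lam * (R 0 - R 1)) := by
          linarith [hsum1, hE0]
      _ ≤ U^2/2 * (2 * Real.log ((M+3:ℕ):ℝ) / lam) + 2 * lam * Real.log (Fintype.card A)
          + lam * (R 0 - R (M+2+1)) := by linarith [hcomb]
  -- finish
  have hfinal_eta : ∑ t ∈ Finset.Icc 1 T,
        ((ip (u t) p - lam * KL p τ) - (ip (u t) (x t) - lam * KL (x t) τ))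
      ≤ U^2/2 * ((T:ℝ)*η) + Real.log (Fintype.card A)/η
        + lam * (Real.log (Fintype.card A) + Q') := by
    have h2 : R 0 - R T ≤ Real.log (Fintype.card A) + Q' := by
      rw [hR0]
      have := hRnonneg T
      linarith
    have h1 : lam * (R 0 - R T) ≤ lam * (Real.log (Fintype.card A) + Q') :=
      mul_le_mul_of_nonneg_left h2 hlam.le
    linarith [base, branch_eta]
  have hfinal_log : ∑ t ∈ Finset.Icc 1 T,
        ((ip (u t) p - lam * KL p τ) - (ip (u t) (x t) - lam * KL (x t) τ))
      ≤ U^2/2 * (2 * Real.log T / lam) + Real.log (Fintype.card A)/η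
        + lam * (Real.log (Fintype.card A) + Q') := by
    have h2 := hRnonneg T
    have h1 : 2 * lam * Real.log (Fintype.card A) + lam * (R 0 - R T)
        ≤ lam * (Real.log (Fintype.card A) + Q') := by
      have h3 : R 0 = Q' - Real.log (Fintype.card A) := hR0
      nlinarith
    linarith [base, branch_log]
  rw [← hQdef]
  rcases le_total (2 * Real.log T / lam) ((T:ℝ) * η) with h | h
  · rw [min_eq_left h]
    exact hfinal_log
  · rw [min_eq_right h]
    exact hfinal_eta
end
end

section
/- The regularized two-player zero-sum Bayesian game admits exactly one Bayes–Nash equilibrium: there is exactly one collection (x*_{i,λ})_{i∈{1,2}, λ∈Λ_i} of policies x*_{i,λ} ∈ Δ(A_i) such that for every player i and every type λ ∈ Λ_i, x*_{i,λ} maximizes x ↦ ⟨M_i x̄*_{−i}, x⟩ − λ D_KL(x‖τ_i) over Δ(A_i), where x̄*_{−i} := E_{λ'∼β_{−i}}[x*_{−i,λ'}]. -/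
open Finset Real

noncomputable section

namespace RegGame

lemma kl_term_lt {x y : ℝ} (hx : 0 ≤ x) (hy : 0 < y) (hne : x ≠ y) :
    x - y < x * Real.log (x / y) := by
  rcases hx.lt_or_eq with hx' | hx'
  · have hxy : y / x ≠ 1 := by
      intro h
      exact hne (by field_simp at h; linarith)
    have h1 : Real.log (y / x) < y / x - 1 :=
      Real.log_lt_sub_one_of_pos (div_pos hy hx') hxy
    have h2 : Real.log (x / y) = - Real.log (y / x) := by
      rw [← Real.log_inv]; congr 1; field_simp
    rw [h2]
    have h3 : x * Real.log (y / x) < x * (y / x - 1) := by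
      exact (mul_lt_mul_iff_right₀ hx').2 h1
    have h4 : x * (y / x - 1) = y - x := by field_simp
    nlinarith
  · rw [← hx']
    simpa using hy

lemma kl_term_le {x y : ℝ} (hx : 0 ≤ x) (hy : 0 < y) :
    x - y ≤ x * Real.log (x / y) := by
  rcases eq_or_ne x y with h | h
  · subst h
    rcases hx.lt_or_eq with hx' | hx'
    · rw [div_self hx'.ne', Real.log_one]; simp
    · rw [← hx']; simp
  · exact (kl_term_lt hx hy h).le

variable {A : Type*} [Fintype A]

lemma KL_nonneg {x y : A → ℝ} (hx : x ∈ simplex A) (hy : ∀ a, 0 < y a)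
    (hysum : ∑ a, y a = 1) : 0 ≤ KL x y := by
  have h : ∑ a, (x a - y a) ≤ KL x y :=
    Finset.sum_le_sum fun a _ => kl_term_le (hx.1 a) (hy a)
  have : ∑ a, (x a - y a) = 0 := by
    rw [Finset.sum_sub_distrib, hx.2, hysum, sub_self]
  linarith

lemma KL_pos {x y : A → ℝ} (hx : x ∈ simplex A) (hy : ∀ a, 0 < y a)
    (hysum : ∑ a, y a = 1) (hne : x ≠ y) : 0 < KL x y := by
  obtain ⟨a₀, ha₀⟩ : ∃ a, x a ≠ y a := by
    by_contra h
    push_neg at h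
    exact hne (funext h)
  have h : ∑ a, (x a - y a) < KL x y := by
    apply Finset.sum_lt_sum (fun a _ => kl_term_le (hx.1 a) (hy a))
    exact ⟨a₀, Finset.mem_univ a₀, kl_term_lt (hx.1 a₀) (hy a₀) ha₀⟩
  have : ∑ a, (x a - y a) = 0 := by
    rw [Finset.sum_sub_distrib, hx.2, hysum, sub_self]
  linarith

lemma KL_self {y : A → ℝ} (hy : ∀ a, 0 < y a) : KL y y = 0 := by
  unfold KL
  apply Finset.sum_eq_zero
  intro a _
  rw [div_self (hy a).ne', Real.log_one, mul_zero]

/-- partition function -/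
def Zf (lam : ℝ) (u τ : A → ℝ) : ℝ := ∑ a, τ a * Real.exp (u a / lam)

/-- Gibbs distribution -/
def gibbs (lam : ℝ) (u τ : A → ℝ) : A → ℝ :=
  fun a => τ a * Real.exp (u a / lam) / Zf lam u τ

variable [Nonempty A]

lemma Zf_pos {lam : ℝ} {u τ : A → ℝ} (hτ : ∀ a, 0 < τ a) : 0 < Zf lam u τ :=
  Finset.sum_pos (fun a _ => mul_pos (hτ a) (Real.exp_pos _)) Finset.univ_nonempty

lemma gibbs_pos {lam : ℝ} {u τ : A → ℝ} (hτ : ∀ a, 0 < τ a) (a : A) :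
    0 < gibbs lam u τ a :=
  div_pos (mul_pos (hτ a) (Real.exp_pos _)) (Zf_pos hτ)

lemma gibbs_sum {lam : ℝ} {u τ : A → ℝ} (hτ : ∀ a, 0 < τ a) :
    ∑ a, gibbs lam u τ a = 1 := by
  unfold gibbs
  rw [← Finset.sum_div]
  exact div_self (Zf_pos hτ).ne'

lemma gibbs_mem {lam : ℝ} {u τ : A → ℝ} (hτ : ∀ a, 0 < τ a) :
    gibbs lam u τ ∈ simplex A :=
  ⟨fun a => (gibbs_pos hτ a).le, gibbs_sum hτ⟩

lemma log_gibbs {lam : ℝ} {u τ : A → ℝ} (hlam : 0 < lam) (hτ : ∀ a, 0 < τ a) (a : A) :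
    Real.log (gibbs lam u τ a) = Real.log (τ a) + u a / lam - Real.log (Zf lam u τ) := by
  unfold gibbs
  rw [Real.log_div (mul_pos (hτ a) (Real.exp_pos _)).ne' (Zf_pos hτ).ne',
    Real.log_mul (hτ a).ne' (Real.exp_pos _).ne', Real.log_exp]

/-- The key identity. -/
lemma key_identity {lam : ℝ} {u τ x : A → ℝ} (hlam : 0 < lam) (hτ : ∀ a, 0 < τ a)
    (hx : x ∈ simplex A) :
    ip u x - lam * KL x τ
      = lam * Real.log (Zf lam u τ) - lam * KL x (gibbs lam u τ) := by
  have hterm : ∀ a, x a * Real.log (x a / gibbs lam u τ a)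
      = x a * Real.log (x a / τ a) - u a * x a / lam + x a * Real.log (Zf lam u τ) := by
    intro a
    rcases (hx.1 a).lt_or_eq with hxa | hxa
    · rw [Real.log_div hxa.ne' (gibbs_pos hτ a).ne', Real.log_div hxa.ne' (hτ a).ne',
        log_gibbs hlam hτ]
      ring
    · rw [← hxa]; ring
  have h1 : KL x (gibbs lam u τ)
      = KL x τ - ip u x / lam + Real.log (Zf lam u τ) := by
    unfold KL ip
    rw [Finset.sum_congr rfl (fun a _ => hterm a)]
    rw [Finset.sum_add_distrib, Finset.sum_sub_distrib, ← Finset.sum_div, ← Finset.sum_mul,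
      hx.2, one_mul]
  rw [h1]
  field_simp
  ring

lemma gibbs_isMaxOn {lam : ℝ} {u τ : A → ℝ} (hlam : 0 < lam) (hτ : ∀ a, 0 < τ a) :
    IsMaxOn (fun x => ip u x - lam * KL x τ) (simplex A) (gibbs lam u τ) := by
  intro y hy
  have h1 := key_identity (u := u) hlam hτ hy
  have h2 := key_identity (u := u) hlam hτ (gibbs_mem (lam := lam) (u := u) hτ)
  have h3 : KL (gibbs lam u τ) (gibbs lam u τ) = 0 := KL_self (gibbs_pos hτ)
  have h4 : 0 ≤ KL y (gibbs lam u τ) :=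
    KL_nonneg hy (gibbs_pos hτ) (gibbs_sum hτ)
  simp only [Set.mem_setOf_eq]
  rw [h1, h2, h3]
  nlinarith

lemma eq_gibbs_of_isMaxOn {lam : ℝ} {u τ : A → ℝ} {x : A → ℝ} (hlam : 0 < lam)
    (hτ : ∀ a, 0 < τ a) (hx : x ∈ simplex A)
    (hmax : IsMaxOn (fun x => ip u x - lam * KL x τ) (simplex A) x) :
    x = gibbs lam u τ := by
  by_contra hne
  have h1 := hmax (gibbs_mem (lam := lam) (u := u) hτ)
  simp only [Set.mem_setOf_eq] at h1
  have h2 := key_identity (u := u) hlam hτ hx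
  have h3 := key_identity (u := u) hlam hτ (gibbs_mem (lam := lam) (u := u) hτ)
  have h4 : KL (gibbs lam u τ) (gibbs lam u τ) = 0 := KL_self (gibbs_pos hτ)
  have h5 : 0 < KL x (gibbs lam u τ) := KL_pos hx (gibbs_pos hτ) (gibbs_sum hτ) hne
  nlinarith

/-- Monotonicity: two gibbs responses. -/
lemma gibbs_mono {lam : ℝ} {u u' τ : A → ℝ} (hlam : 0 < lam) (hτ : ∀ a, 0 < τ a) :
    ip u (gibbs lam u τ) - ip u (gibbs lam u' τ)
      + (ip u' (gibbs lam u' τ) - ip u' (gibbs lam u τ))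
    = lam * (KL (gibbs lam u' τ) (gibbs lam u τ) + KL (gibbs lam u τ) (gibbs lam u' τ)) := by
  have h1 := key_identity (u := u) hlam hτ (gibbs_mem (lam := lam) (u := u) hτ)
  have h2 := key_identity (u := u) hlam hτ (gibbs_mem (lam := lam) (u := u') hτ)
  have h3 := key_identity (u := u') hlam hτ (gibbs_mem (lam := lam) (u := u') hτ)
  have h4 := key_identity (u := u') hlam hτ (gibbs_mem (lam := lam) (u := u) hτ)
  have h5 : KL (gibbs lam u τ) (gibbs lam u τ) = 0 := KL_self (gibbs_pos hτ)
  have h6 : KL (gibbs lam u' τ) (gibbs lam u' τ) = 0 := KL_self (gibbs_pos hτ)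
  nlinarith [h1, h2, h3, h4]


lemma ip_bar {I : Type*} (s : Finset I) (c : I → ℝ)
    (p : I → A → ℝ) (v : A → ℝ) :
    ip v (fun b => ∑ l ∈ s, c l * p l b) = ∑ l ∈ s, c l * ip v (p l) := by
  unfold ip
  simp only [Finset.mul_sum]
  rw [Finset.sum_comm]
  exact Finset.sum_congr rfl fun l _ => Finset.sum_congr rfl fun b _ => by ring

lemma ip_neg (u x : A → ℝ) : ip (-u) x = - ip u x := by
  simp [ip, neg_mul, Finset.sum_neg_distrib]

lemma mul_log_div_convex {c : ℝ} (hc : 0 < c) {x1 x2 t : ℝ} (h1 : 0 ≤ x1) (h2 : 0 ≤ x2)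
    (ht0 : 0 ≤ t) (ht1 : t ≤ 1) :
    ((1-t)*x1 + t*x2) * Real.log (((1-t)*x1 + t*x2)/c)
      ≤ (1-t) * (x1 * Real.log (x1/c)) + t * (x2 * Real.log (x2/c)) := by
  have hz : ∀ z : ℝ, z * Real.log (z/c) = c * (z/c * Real.log (z/c)) := fun z => by
    rw [← mul_assoc, mul_div_cancel₀ _ hc.ne']
  have hcvx := Real.convexOn_mul_log.2 (Set.mem_Ici.2 (div_nonneg h1 hc.le))
    (Set.mem_Ici.2 (div_nonneg h2 hc.le)) (by linarith : (0:ℝ) ≤ 1 - t) ht0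
    (by ring : (1-t) + t = 1)
  simp only [smul_eq_mul] at hcvx
  have hmix : ((1-t)*x1 + t*x2)/c = (1-t)*(x1/c) + t*(x2/c) := by ring
  rw [hz, hz, hz, hmix]
  have := mul_le_mul_of_nonneg_left hcvx hc.le
  nlinarith [this]

lemma continuous_gibbs {lam : ℝ} {τ : A → ℝ} (hτ : ∀ a, 0 < τ a) {X : Type*}
    [TopologicalSpace X] {u : X → A → ℝ} (hu : ∀ a, Continuous fun x => u x a) (a : A) :
    Continuous fun x => gibbs lam (u x) τ a := by
  unfold gibbs Zf
  apply Continuous.div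
  · exact continuous_const.mul (Real.continuous_exp.comp ((hu a).div_const _))
  · exact continuous_finset_sum _ fun b _ =>
      continuous_const.mul (Real.continuous_exp.comp ((hu b).div_const _))
  · exact fun x => (Zf_pos (u := u x) hτ).ne'

lemma continuous_KL {τ : A → ℝ} (hτ : ∀ a, 0 < τ a) :
    Continuous fun x : A → ℝ => KL x τ := by
  unfold KL
  apply continuous_finset_sum
  intro a _
  have h : (fun x : A → ℝ => x a * Real.log (x a / τ a))
      = fun x => τ a * (x a / τ a * Real.log (x a / τ a)) := funext fun x => by
    rw [← mul_assoc, mul_div_cancel₀ _ (hτ a).ne']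
  rw [h]
  exact continuous_const.mul (Real.continuous_mul_log.comp ((continuous_apply a).div_const _))


lemma ip_mulVec_symm {A₁ A₂ : Type*} [Fintype A₁] [Fintype A₂]
    (M : Matrix A₁ A₂ ℝ) (x : A₁ → ℝ) (y : A₂ → ℝ) :
    ip (M.mulVec y) x = ip (M.transpose.mulVec x) y := by
  unfold ip Matrix.mulVec dotProduct
  simp only [Matrix.transpose_apply, Finset.sum_mul]
  rw [Finset.sum_comm]
  exact Finset.sum_congr rfl fun b _ => Finset.sum_congr rfl fun a _ => by ring

/-- β-average of a type-indexed family of policies. -/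
def avg {A : Type*} [Fintype A] (Λ : Finset ℝ) (β : ℝ → ℝ) (q : {l // l ∈ Λ} → A → ℝ) :
    A → ℝ :=
  fun b => ∑ l ∈ Λ.attach, β l.1 * q l b

/-- Player 1's payoff vector. -/
def u1 {A₁ A₂ : Type*} [Fintype A₁] [Fintype A₂] (M : Matrix A₁ A₂ ℝ)
    (Λ₂ : Finset ℝ) (β₂ : ℝ → ℝ) (q : {l // l ∈ Λ₂} → A₂ → ℝ) : A₁ → ℝ :=
  M.mulVec (avg Λ₂ β₂ q)

/-- Player 2's payoff vector. -/
def u2 {A₁ A₂ : Type*} [Fintype A₁] [Fintype A₂] (M : Matrix A₁ A₂ ℝ)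
    (Λ₁ : Finset ℝ) (β₁ : ℝ → ℝ) (p : {l // l ∈ Λ₁} → A₁ → ℝ) : A₂ → ℝ :=
  -(M.transpose.mulVec (avg Λ₁ β₁ p))

section Game

variable {A₁ A₂ : Type*} [Fintype A₁] [Fintype A₂] [Nonempty A₁] [Nonempty A₂]
  {M : Matrix A₁ A₂ ℝ} {Λ₁ Λ₂ : Finset ℝ} {β₁ β₂ : ℝ → ℝ} {τ₁ : A₁ → ℝ} {τ₂ : A₂ → ℝ}

lemma ip_u1_avg (q : {l // l ∈ Λ₂} → A₂ → ℝ) (p : {l // l ∈ Λ₁} → A₁ → ℝ) :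
    ∑ l ∈ Λ₁.attach, β₁ l.1 * ip (u1 M Λ₂ β₂ q) (p l)
      = - ∑ l ∈ Λ₂.attach, β₂ l.1 * ip (u2 M Λ₁ β₁ p) (q l) := by
  rw [← ip_bar]
  have h1 : ip (u1 M Λ₂ β₂ q) (fun b => ∑ l ∈ Λ₁.attach, β₁ l.1 * p l b)
      = ip (M.transpose.mulVec (avg Λ₁ β₁ p)) (avg Λ₂ β₂ q) := by
    exact ip_mulVec_symm M (avg Λ₁ β₁ p) (avg Λ₂ β₂ q)
  rw [h1]
  have h2 : ∀ l : {l // l ∈ Λ₂},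
      β₂ l.1 * ip (u2 M Λ₁ β₁ p) (q l)
        = - (β₂ l.1 * ip (M.transpose.mulVec (avg Λ₁ β₁ p)) (q l)) := by
    intro l
    rw [show u2 M Λ₁ β₁ p = -(M.transpose.mulVec (avg Λ₁ β₁ p)) from rfl,
      ip_neg]
    ring
  rw [Finset.sum_congr rfl fun l _ => h2 l]
  rw [Finset.sum_neg_distrib, neg_neg]
  rw [show avg Λ₂ β₂ q = (fun b => ∑ l ∈ Λ₂.attach, β₂ l.1 * q l b) from rfl, ip_bar]

lemma sum_mix {I : Type*} (s : Finset I) (w f g : I → ℝ) (t : ℝ) :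
    ∑ i ∈ s, w i * ((1-t) * f i + t * g i)
      = (1-t) * ∑ i ∈ s, w i * f i + t * ∑ i ∈ s, w i * g i := by
  rw [Finset.mul_sum, Finset.mul_sum, ← Finset.sum_add_distrib]
  exact Finset.sum_congr rfl fun i _ => by ring

/-- fixed-point property -/
def IsFix (M : Matrix A₁ A₂ ℝ) (Λ₁ Λ₂ : Finset ℝ) (β₁ β₂ : ℝ → ℝ)
    (τ₁ : A₁ → ℝ) (τ₂ : A₂ → ℝ)
    (p : {l // l ∈ Λ₁} → A₁ → ℝ) (q : {l // l ∈ Λ₂} → A₂ → ℝ) : Prop :=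
  (∀ l, p l = gibbs l.1 (u1 M Λ₂ β₂ q) τ₁) ∧ (∀ l, q l = gibbs l.1 (u2 M Λ₁ β₁ p) τ₂)

/-- The potential function minimized by player 2's profile. -/
def Lfun (M : Matrix A₁ A₂ ℝ) (Λ₁ Λ₂ : Finset ℝ) (β₁ β₂ : ℝ → ℝ)
    (τ₁ : A₁ → ℝ) (τ₂ : A₂ → ℝ)
    (p : {l // l ∈ Λ₁} → A₁ → ℝ) (q : {l // l ∈ Λ₂} → A₂ → ℝ) : ℝ :=
  ∑ l ∈ Λ₁.attach, β₁ l.1 * (ip (u1 M Λ₂ β₂ q) (p l) - l.1 * KL (p l) τ₁)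
    + ∑ l ∈ Λ₂.attach, β₂ l.1 * (l.1 * KL (q l) τ₂)

lemma exists_fixed (hΛ₁pos : ∀ l ∈ Λ₁, (0:ℝ) < l) (hΛ₂pos : ∀ l ∈ Λ₂, (0:ℝ) < l)
    (hβ₁ : ∀ l ∈ Λ₁, 0 ≤ β₁ l) (hβ₂ : ∀ l ∈ Λ₂, 0 ≤ β₂ l)
    (hτ₁pos : ∀ a, 0 < τ₁ a) (hτ₂ : τ₂ ∈ simplex A₂) (hτ₂pos : ∀ a, 0 < τ₂ a) :
    ∃ (p : {l // l ∈ Λ₁} → A₁ → ℝ) (q : {l // l ∈ Λ₂} → A₂ → ℝ),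
      IsFix M Λ₁ Λ₂ β₁ β₂ τ₁ τ₂ p q := by
  classical
  set K : Set ({l // l ∈ Λ₂} → A₂ → ℝ) := {q | ∀ l, q l ∈ simplex A₂} with hKdef
  have hsimp2 : IsCompact (simplex A₂) := isCompact_stdSimplex ℝ A₂
  have hKeq : K = Set.pi Set.univ (fun _ : {l // l ∈ Λ₂} => simplex A₂) := by
    ext q
    simp [hKdef, Set.mem_pi]
  have hKco : IsCompact K := hKeq ▸ isCompact_univ_pi fun _ => hsimp2
  have hKne : K.Nonempty := ⟨fun _ => τ₂, fun _ => hτ₂⟩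
  have hu1c : ∀ a, Continuous fun q : {l // l ∈ Λ₂} → A₂ → ℝ => u1 M Λ₂ β₂ q a := by
    intro a
    show Continuous fun q : {l // l ∈ Λ₂} → A₂ → ℝ =>
      ∑ b, M a b * ∑ l ∈ Λ₂.attach, β₂ l.1 * q l b
    exact continuous_finset_sum _ fun b _ => continuous_const.mul
      (continuous_finset_sum _ fun l _ => continuous_const.mul
        ((continuous_apply b).comp (continuous_apply l)))
  set hfun : ({l // l ∈ Λ₂} → A₂ → ℝ) → ℝ := fun q =>
    ∑ l ∈ Λ₁.attach, β₁ l.1 * (l.1 * Real.log (Zf l.1 (u1 M Λ₂ β₂ q) τ₁))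
    + ∑ l ∈ Λ₂.attach, β₂ l.1 * (l.1 * KL (q l) τ₂) with hfdef
  have hcont : Continuous hfun := by
    apply Continuous.add
    · apply continuous_finset_sum
      intro l _
      apply Continuous.mul continuous_const
      apply Continuous.mul continuous_const
      apply Continuous.log
      · show Continuous fun q : {l // l ∈ Λ₂} → A₂ → ℝ =>
          ∑ a, τ₁ a * Real.exp (u1 M Λ₂ β₂ q a / l.1)
        exact continuous_finset_sum _ fun a _ => continuous_const.mul
          (Real.continuous_exp.comp ((hu1c a).div_const _))
      · exact fun q => (Zf_pos hτ₁pos).ne'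
    · apply continuous_finset_sum
      intro l _
      exact continuous_const.mul (continuous_const.mul
        ((continuous_KL hτ₂pos).comp (continuous_apply l)))
  obtain ⟨q0, hq0K, hq0min⟩ := hKco.exists_isMinOn hKne hcont.continuousOn
  have hq0mem : ∀ l, q0 l ∈ simplex A₂ := hq0K
  set p0 : {l // l ∈ Λ₁} → A₁ → ℝ := fun l => gibbs l.1 (u1 M Λ₂ β₂ q0) τ₁ with hp0def
  set w : A₂ → ℝ := u2 M Λ₁ β₁ p0 with hwdef
  set g2 : {l // l ∈ Λ₂} → A₂ → ℝ := fun l => gibbs l.1 w τ₂ with hg2def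
  have hg2mem : ∀ l, g2 l ∈ simplex A₂ := fun l => gibbs_mem hτ₂pos
  have hg2pos : ∀ l a, 0 < g2 l a := fun l a => gibbs_pos hτ₂pos a
  -- the gibbs value identity for player 1
  have hgibbsval : ∀ (lam : ℝ), 0 < lam → ∀ (u : A₁ → ℝ),
      ip u (gibbs lam u τ₁) - lam * KL (gibbs lam u τ₁) τ₁
        = lam * Real.log (Zf lam u τ₁) := by
    intro lam hlam u
    have hk := key_identity (u := u) hlam hτ₁pos (gibbs_mem (lam := lam) (u := u) hτ₁pos)
    rw [KL_self (gibbs_pos (lam := lam) (u := u) hτ₁pos)] at hk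
    linarith
  have hF1 : ∀ q, hfun q = Lfun M Λ₁ Λ₂ β₁ β₂ τ₁ τ₂
      (fun l => gibbs l.1 (u1 M Λ₂ β₂ q) τ₁) q := by
    intro q
    show (∑ l ∈ Λ₁.attach, β₁ l.1 * (l.1 * Real.log (Zf l.1 (u1 M Λ₂ β₂ q) τ₁)))
        + (∑ l ∈ Λ₂.attach, β₂ l.1 * (l.1 * KL (q l) τ₂))
      = (∑ l ∈ Λ₁.attach, β₁ l.1 * (ip (u1 M Λ₂ β₂ q)
          (gibbs l.1 (u1 M Λ₂ β₂ q) τ₁) - l.1 * KL (gibbs l.1 (u1 M Λ₂ β₂ q) τ₁) τ₁))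
        + ∑ l ∈ Λ₂.attach, β₂ l.1 * (l.1 * KL (q l) τ₂)
    congr 1
    refine Finset.sum_congr rfl fun l _ => ?_
    rw [hgibbsval l.1 (hΛ₁pos l.1 l.2) (u1 M Λ₂ β₂ q)]
  have hF2 : ∀ (p : {l // l ∈ Λ₁} → A₁ → ℝ), (∀ l, p l ∈ simplex A₁) →
      ∀ q, Lfun M Λ₁ Λ₂ β₁ β₂ τ₁ τ₂ p q ≤ hfun q := by
    intro p hp q
    show (∑ l ∈ Λ₁.attach, β₁ l.1 * (ip (u1 M Λ₂ β₂ q) (p l) - l.1 * KL (p l) τ₁))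
        + ∑ l ∈ Λ₂.attach, β₂ l.1 * (l.1 * KL (q l) τ₂)
      ≤ (∑ l ∈ Λ₁.attach, β₁ l.1 * (l.1 * Real.log (Zf l.1 (u1 M Λ₂ β₂ q) τ₁)))
        + ∑ l ∈ Λ₂.attach, β₂ l.1 * (l.1 * KL (q l) τ₂)
    apply add_le_add_left
    refine Finset.sum_le_sum fun l _ => ?_
    have hmax := gibbs_isMaxOn (u := u1 M Λ₂ β₂ q) (hΛ₁pos l.1 l.2) hτ₁pos (hp l)
    simp only [Set.mem_setOf_eq] at hmax
    have hval := hgibbsval l.1 (hΛ₁pos l.1 l.2) (u1 M Λ₂ β₂ q)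
    have hb := hβ₁ l.1 l.2
    have hinner : ip (u1 M Λ₂ β₂ q) (p l) - l.1 * KL (p l) τ₁
        ≤ l.1 * Real.log (Zf l.1 (u1 M Λ₂ β₂ q) τ₁) := by linarith
    exact mul_le_mul_of_nonneg_left hinner hb
  -- the main claim: q0 agrees with the best response g2 wherever β₂ is positive
  have hfix2 : ∀ l : {l // l ∈ Λ₂}, β₂ l.1 ≠ 0 → q0 l = g2 l := by
    by_contra hcon
    push_neg at hcon
    obtain ⟨l0, hb0, hne0⟩ := hcon
    set qmix : ℝ → ({l // l ∈ Λ₂} → A₂ → ℝ) :=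
      fun t l b => (1-t) * q0 l b + t * g2 l b with hqmixdef
    have hqmixK : ∀ t, 0 ≤ t → t ≤ 1 → qmix t ∈ K := by
      intro t ht0 ht1 l
      constructor
      · intro b
        have h1 := (hq0mem l).1 b
        have h2 := (hg2mem l).1 b
        have h1t : (0:ℝ) ≤ 1 - t := by linarith
        exact add_nonneg (mul_nonneg h1t h1) (mul_nonneg ht0 h2)
      · show ∑ b, ((1-t) * q0 l b + t * g2 l b) = 1
        rw [Finset.sum_add_distrib, ← Finset.mul_sum, ← Finset.mul_sum,
          (hq0mem l).2, (hg2mem l).2]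
        ring
    set pt : ℝ → ({l // l ∈ Λ₁} → A₁ → ℝ) :=
      fun t l => gibbs l.1 (u1 M Λ₂ β₂ (qmix t)) τ₁ with hptdef
    have havgmix : ∀ t b, avg Λ₂ β₂ (qmix t) b
        = (1-t) * avg Λ₂ β₂ q0 b + t * avg Λ₂ β₂ g2 b := by
      intro t b
      exact sum_mix Λ₂.attach (fun l => β₂ l.1) (fun l => q0 l b) (fun l => g2 l b) t
    have hu1mix : ∀ t a, u1 M Λ₂ β₂ (qmix t) a
        = (1-t) * u1 M Λ₂ β₂ q0 a + t * u1 M Λ₂ β₂ g2 a := by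
      intro t a
      show ∑ b, M a b * avg Λ₂ β₂ (qmix t) b = _
      rw [Finset.sum_congr rfl fun b (_ : b ∈ Finset.univ) => by rw [havgmix t b]]
      exact sum_mix Finset.univ (fun b => M a b) (fun b => avg Λ₂ β₂ q0 b)
        (fun b => avg Λ₂ β₂ g2 b) t
    have hipmix : ∀ t (x : A₁ → ℝ), ip (u1 M Λ₂ β₂ (qmix t)) x
        = (1-t) * ip (u1 M Λ₂ β₂ q0) x + t * ip (u1 M Λ₂ β₂ g2) x := by
      intro t x
      unfold ip
      rw [Finset.sum_congr rfl fun a (_ : a ∈ Finset.univ) => by rw [hu1mix t a]]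
      rw [Finset.mul_sum, Finset.mul_sum, ← Finset.sum_add_distrib]
      exact Finset.sum_congr rfl fun a _ => by ring
    have hKLmix : ∀ t, 0 ≤ t → t ≤ 1 → ∀ l : {l // l ∈ Λ₂},
        KL (qmix t l) τ₂ ≤ (1-t) * KL (q0 l) τ₂ + t * KL (g2 l) τ₂ := by
      intro t ht0 ht1 l
      unfold KL
      rw [Finset.mul_sum, Finset.mul_sum, ← Finset.sum_add_distrib]
      refine Finset.sum_le_sum fun a _ => ?_
      exact mul_log_div_convex (hτ₂pos a) ((hq0mem l).1 a) ((hg2mem l).1 a) ht0 ht1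
    have hF3 : ∀ (p : {l // l ∈ Λ₁} → A₁ → ℝ) t, 0 ≤ t → t ≤ 1 →
        Lfun M Λ₁ Λ₂ β₁ β₂ τ₁ τ₂ p (qmix t)
          ≤ (1-t) * Lfun M Λ₁ Λ₂ β₁ β₂ τ₁ τ₂ p q0
            + t * Lfun M Λ₁ Λ₂ β₁ β₂ τ₁ τ₂ p g2 := by
      intro p t ht0 ht1
      have e1 : ∑ l ∈ Λ₁.attach, β₁ l.1 * (ip (u1 M Λ₂ β₂ (qmix t)) (p l) - l.1 * KL (p l) τ₁)
          = (1-t) * ∑ l ∈ Λ₁.attach, β₁ l.1 * (ip (u1 M Λ₂ β₂ q0) (p l) - l.1 * KL (p l) τ₁)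
          + t * ∑ l ∈ Λ₁.attach, β₁ l.1 * (ip (u1 M Λ₂ β₂ g2) (p l) - l.1 * KL (p l) τ₁) := by
        rw [Finset.mul_sum, Finset.mul_sum, ← Finset.sum_add_distrib]
        refine Finset.sum_congr rfl fun l _ => ?_
        rw [hipmix t (p l)]
        ring
      have e2 : ∑ l ∈ Λ₂.attach, β₂ l.1 * (l.1 * KL (qmix t l) τ₂)
          ≤ (1-t) * ∑ l ∈ Λ₂.attach, β₂ l.1 * (l.1 * KL (q0 l) τ₂)
          + t * ∑ l ∈ Λ₂.attach, β₂ l.1 * (l.1 * KL (g2 l) τ₂) := by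
        rw [Finset.mul_sum, Finset.mul_sum, ← Finset.sum_add_distrib]
        refine Finset.sum_le_sum fun l _ => ?_
        have hKLl := hKLmix t ht0 ht1 l
        have hb := hβ₂ l.1 l.2
        have hl := (hΛ₂pos l.1 l.2).le
        nlinarith [mul_le_mul_of_nonneg_left hKLl (mul_nonneg hb hl)]
      show (∑ l ∈ Λ₁.attach, β₁ l.1 * (ip (u1 M Λ₂ β₂ (qmix t)) (p l) - l.1 * KL (p l) τ₁))
          + ∑ l ∈ Λ₂.attach, β₂ l.1 * (l.1 * KL (qmix t l) τ₂) ≤ _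
      have hrhs : (1-t) * Lfun M Λ₁ Λ₂ β₁ β₂ τ₁ τ₂ p q0
            + t * Lfun M Λ₁ Λ₂ β₁ β₂ τ₁ τ₂ p g2
          = ((1-t) * ∑ l ∈ Λ₁.attach, β₁ l.1 * (ip (u1 M Λ₂ β₂ q0) (p l) - l.1 * KL (p l) τ₁)
            + t * ∑ l ∈ Λ₁.attach, β₁ l.1 * (ip (u1 M Λ₂ β₂ g2) (p l) - l.1 * KL (p l) τ₁))
          + ((1-t) * ∑ l ∈ Λ₂.attach, β₂ l.1 * (l.1 * KL (q0 l) τ₂)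
            + t * ∑ l ∈ Λ₂.attach, β₂ l.1 * (l.1 * KL (g2 l) τ₂)) := by
        unfold Lfun
        ring
      rw [hrhs, e1]
      linarith
    -- the deficiency δ
    set δ : ℝ := ∑ l ∈ Λ₂.attach, β₂ l.1 * (l.1 * KL (q0 l) (g2 l)) with hδdef
    have hδpos : 0 < δ := by
      have hterm : ∀ l ∈ Λ₂.attach, 0 ≤ β₂ l.1 * (l.1 * KL (q0 l) (g2 l)) := fun l _ =>
        mul_nonneg (hβ₂ l.1 l.2) (mul_nonneg (hΛ₂pos l.1 l.2).le
          (KL_nonneg (hq0mem l) (hg2pos l) (hg2mem l).2))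
      have hl0 : 0 < β₂ l0.1 * (l0.1 * KL (q0 l0) (g2 l0)) := by
        have hKL := KL_pos (hq0mem l0) (hg2pos l0) (hg2mem l0).2 hne0
        have hb : 0 < β₂ l0.1 := lt_of_le_of_ne (hβ₂ l0.1 l0.2) (Ne.symm hb0)
        exact mul_pos hb (mul_pos (hΛ₂pos l0.1 l0.2) hKL)
      calc (0:ℝ) < β₂ l0.1 * (l0.1 * KL (q0 l0) (g2 l0)) := hl0
        _ ≤ δ := Finset.single_le_sum hterm (Finset.mem_attach _ l0)
    -- the value of L p0 at q vs the second-player regularizer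
    have hA : ∀ q : {l // l ∈ Λ₂} → A₂ → ℝ, Lfun M Λ₁ Λ₂ β₁ β₂ τ₁ τ₂ p0 q
        = - (∑ l ∈ Λ₂.attach, β₂ l.1 * ip w (q l))
          - (∑ l ∈ Λ₁.attach, β₁ l.1 * (l.1 * KL (p0 l) τ₁))
          + ∑ l ∈ Λ₂.attach, β₂ l.1 * (l.1 * KL (q l) τ₂) := by
      intro q
      have hsplit : ∑ l ∈ Λ₁.attach, β₁ l.1 * (ip (u1 M Λ₂ β₂ q) (p0 l) - l.1 * KL (p0 l) τ₁)
          = (∑ l ∈ Λ₁.attach, β₁ l.1 * ip (u1 M Λ₂ β₂ q) (p0 l))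
            - ∑ l ∈ Λ₁.attach, β₁ l.1 * (l.1 * KL (p0 l) τ₁) := by
        rw [← Finset.sum_sub_distrib]
        exact Finset.sum_congr rfl fun l _ => by ring
      have hsw := ip_u1_avg (M := M) (β₁ := β₁) (β₂ := β₂) q p0
      rw [← hwdef] at hsw
      unfold Lfun
      rw [hsplit, hsw]
    have hkey2 : ∀ (x : A₂ → ℝ), x ∈ simplex A₂ → ∀ l : {l // l ∈ Λ₂},
        ip w x - l.1 * KL x τ₂
          = l.1 * Real.log (Zf l.1 w τ₂) - l.1 * KL x (g2 l) :=
      fun x hx l => key_identity (hΛ₂pos l.1 l.2) hτ₂pos hx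
    have hper : ∀ l : {l // l ∈ Λ₂},
        (β₂ l.1 * (l.1 * KL (g2 l) τ₂) - β₂ l.1 * ip w (g2 l))
          - (β₂ l.1 * (l.1 * KL (q0 l) τ₂) - β₂ l.1 * ip w (q0 l))
        = - (β₂ l.1 * (l.1 * KL (q0 l) (g2 l))) := by
      intro l
      have h1 := hkey2 (q0 l) (hq0mem l) l
      have h2 := hkey2 (g2 l) (hg2mem l) l
      have h3 : KL (g2 l) (g2 l) = 0 := KL_self (hg2pos l)
      rw [h3] at h2
      linear_combination β₂ l.1 * h1 - β₂ l.1 * h2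
    have hF6 : Lfun M Λ₁ Λ₂ β₁ β₂ τ₁ τ₂ p0 g2 - Lfun M Λ₁ Λ₂ β₁ β₂ τ₁ τ₂ p0 q0 = - δ := by
      have e5 : ∑ l ∈ Λ₂.attach,
          ((β₂ l.1 * (l.1 * KL (g2 l) τ₂) - β₂ l.1 * ip w (g2 l))
            - (β₂ l.1 * (l.1 * KL (q0 l) τ₂) - β₂ l.1 * ip w (q0 l))) = - δ := by
        rw [hδdef, ← Finset.sum_neg_distrib]
        exact Finset.sum_congr rfl fun l _ => hper l
      have e6 : ∑ l ∈ Λ₂.attach,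
          ((β₂ l.1 * (l.1 * KL (g2 l) τ₂) - β₂ l.1 * ip w (g2 l))
            - (β₂ l.1 * (l.1 * KL (q0 l) τ₂) - β₂ l.1 * ip w (q0 l)))
          = ((∑ l ∈ Λ₂.attach, β₂ l.1 * (l.1 * KL (g2 l) τ₂))
              - ∑ l ∈ Λ₂.attach, β₂ l.1 * ip w (g2 l))
            - ((∑ l ∈ Λ₂.attach, β₂ l.1 * (l.1 * KL (q0 l) τ₂))
              - ∑ l ∈ Λ₂.attach, β₂ l.1 * ip w (q0 l)) := by
        rw [Finset.sum_sub_distrib, Finset.sum_sub_distrib, Finset.sum_sub_distrib]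
      rw [hA g2, hA q0]
      linarith [e5, e6]
    -- positivity of the directional difference for small positive t
    have hphi : ∀ t ∈ Set.Ioc (0:ℝ) 1,
        0 ≤ Lfun M Λ₁ Λ₂ β₁ β₂ τ₁ τ₂ (pt t) g2 - Lfun M Λ₁ Λ₂ β₁ β₂ τ₁ τ₂ (pt t) q0 := by
      intro t ht
      have ht0 := ht.1
      have ht1 := ht.2
      have hmemK := hqmixK t ht0.le ht1
      have h1 : hfun q0 ≤ hfun (qmix t) := isMinOn_iff.1 hq0min _ hmemK
      have h2 : hfun (qmix t) = Lfun M Λ₁ Λ₂ β₁ β₂ τ₁ τ₂ (pt t) (qmix t) := hF1 (qmix t)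
      have h3 := hF3 (pt t) t ht0.le ht1
      have h4 : Lfun M Λ₁ Λ₂ β₁ β₂ τ₁ τ₂ (pt t) q0 ≤ hfun q0 :=
        hF2 (pt t) (fun l => gibbs_mem hτ₁pos) q0
      by_contra hneg
      push_neg at hneg
      have h5 : t * (Lfun M Λ₁ Λ₂ β₁ β₂ τ₁ τ₂ (pt t) g2
          - Lfun M Λ₁ Λ₂ β₁ β₂ τ₁ τ₂ (pt t) q0) < 0 :=
        mul_neg_of_pos_of_neg ht0 (by linarith)
      nlinarith
    -- continuity in t
    have hptcont : ∀ (l : {l // l ∈ Λ₁}) a, Continuous fun t : ℝ => pt t l a := by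
      intro l a
      show Continuous fun t : ℝ => gibbs l.1 (u1 M Λ₂ β₂ (qmix t)) τ₁ a
      refine continuous_gibbs hτ₁pos (u := fun t => u1 M Λ₂ β₂ (qmix t)) ?_ a
      intro a'
      show Continuous fun t : ℝ =>
        ∑ b, M a' b * ∑ l' ∈ Λ₂.attach, β₂ l'.1 * ((1-t) * q0 l' b + t * g2 l' b)
      exact continuous_finset_sum _ fun b _ => continuous_const.mul
        (continuous_finset_sum _ fun l' _ => continuous_const.mul
          (((continuous_const.sub continuous_id).mul continuous_const).add
            (continuous_id.mul continuous_const)))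
    have hLcont : ∀ q : {l // l ∈ Λ₂} → A₂ → ℝ,
        Continuous fun t => Lfun M Λ₁ Λ₂ β₁ β₂ τ₁ τ₂ (pt t) q := by
      intro q
      show Continuous fun t =>
        (∑ l ∈ Λ₁.attach, β₁ l.1 * (ip (u1 M Λ₂ β₂ q) (pt t l) - l.1 * KL (pt t l) τ₁))
        + ∑ l ∈ Λ₂.attach, β₂ l.1 * (l.1 * KL (q l) τ₂)
      apply Continuous.add
      · apply continuous_finset_sum
        intro l _
        apply Continuous.mul continuous_const
        apply Continuous.sub
        · show Continuous fun t => ∑ a, u1 M Λ₂ β₂ q a * pt t l a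
          exact continuous_finset_sum _ fun a _ => continuous_const.mul (hptcont l a)
        · exact continuous_const.mul
            ((continuous_KL hτ₁pos).comp (continuous_pi fun a => hptcont l a))
      · exact continuous_const
    have htend : Filter.Tendsto
        (fun t => Lfun M Λ₁ Λ₂ β₁ β₂ τ₁ τ₂ (pt t) g2 - Lfun M Λ₁ Λ₂ β₁ β₂ τ₁ τ₂ (pt t) q0)
        (nhdsWithin 0 (Set.Ioi 0))
        (nhds (Lfun M Λ₁ Λ₂ β₁ β₂ τ₁ τ₂ (pt 0) g2
          - Lfun M Λ₁ Λ₂ β₁ β₂ τ₁ τ₂ (pt 0) q0)) :=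
      ((hLcont g2).sub (hLcont q0)).continuousAt.continuousWithinAt
    have hev : ∀ᶠ t in nhdsWithin 0 (Set.Ioi 0),
        0 ≤ Lfun M Λ₁ Λ₂ β₁ β₂ τ₁ τ₂ (pt t) g2 - Lfun M Λ₁ Λ₂ β₁ β₂ τ₁ τ₂ (pt t) q0 := by
      filter_upwards [Ioc_mem_nhdsGT_of_mem (Set.mem_Ico.2 ⟨le_refl (0:ℝ), zero_lt_one⟩)]
        with t ht
      exact hphi t ht
    have h0le : 0 ≤ Lfun M Λ₁ Λ₂ β₁ β₂ τ₁ τ₂ (pt 0) g2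
        - Lfun M Λ₁ Λ₂ β₁ β₂ τ₁ τ₂ (pt 0) q0 := ge_of_tendsto htend hev
    have hpt0 : pt 0 = p0 := by
      have hq : qmix 0 = q0 := by
        funext l' b
        show (1-(0:ℝ)) * q0 l' b + 0 * g2 l' b = q0 l' b
        ring
      funext l
      show gibbs l.1 (u1 M Λ₂ β₂ (qmix 0)) τ₁ = gibbs l.1 (u1 M Λ₂ β₂ q0) τ₁
      rw [hq]
    rw [hpt0, hF6] at h0le
    linarith
  -- conclude
  refine ⟨p0, g2, ?_, fun l => rfl⟩
  intro l
  have havg : avg Λ₂ β₂ g2 = avg Λ₂ β₂ q0 := by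
    funext b
    refine Finset.sum_congr rfl fun l' _ => ?_
    rcases eq_or_ne (β₂ l'.1) 0 with h0 | h0
    · rw [h0]
      ring
    · rw [hfix2 l' h0]
  show gibbs l.1 (u1 M Λ₂ β₂ q0) τ₁ = gibbs l.1 (u1 M Λ₂ β₂ g2) τ₁
  unfold u1
  rw [havg]

lemma unique_fixed (hΛ₁pos : ∀ l ∈ Λ₁, (0:ℝ) < l) (hΛ₂pos : ∀ l ∈ Λ₂, (0:ℝ) < l)
    (hβ₁ : ∀ l ∈ Λ₁, 0 ≤ β₁ l) (hβ₂ : ∀ l ∈ Λ₂, 0 ≤ β₂ l)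
    (hτ₁pos : ∀ a, 0 < τ₁ a) (hτ₂pos : ∀ a, 0 < τ₂ a)
    {p p' : {l // l ∈ Λ₁} → A₁ → ℝ} {q q' : {l // l ∈ Λ₂} → A₂ → ℝ}
    (h : IsFix M Λ₁ Λ₂ β₁ β₂ τ₁ τ₂ p q) (h' : IsFix M Λ₁ Λ₂ β₁ β₂ τ₁ τ₂ p' q') :
    p = p' ∧ q = q' := by
  set v := u1 M Λ₂ β₂ q with hv
  set v' := u1 M Λ₂ β₂ q' with hv'
  set w := u2 M Λ₁ β₁ p with hw
  set w' := u2 M Λ₁ β₁ p' with hw'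
  -- the two monotonicity sums
  set S1 : ℝ := ∑ l ∈ Λ₁.attach, β₁ l.1 *
    (ip v (p l) - ip v (p' l) + (ip v' (p' l) - ip v' (p l))) with hS1def
  set S2 : ℝ := ∑ l ∈ Λ₂.attach, β₂ l.1 *
    (ip w (q l) - ip w (q' l) + (ip w' (q' l) - ip w' (q l))) with hS2def
  have hterm1 : ∀ l : {l // l ∈ Λ₁},
      ip v (p l) - ip v (p' l) + (ip v' (p' l) - ip v' (p l))
        = l.1 * (KL (p' l) (p l) + KL (p l) (p' l)) := by
    intro l
    rw [h.1 l, h'.1 l]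
    exact gibbs_mono (hΛ₁pos l.1 l.2) hτ₁pos
  have hterm2 : ∀ l : {l // l ∈ Λ₂},
      ip w (q l) - ip w (q' l) + (ip w' (q' l) - ip w' (q l))
        = l.1 * (KL (q' l) (q l) + KL (q l) (q' l)) := by
    intro l
    rw [h.2 l, h'.2 l]
    exact gibbs_mono (hΛ₂pos l.1 l.2) hτ₂pos
  have hpmem : ∀ l, p l ∈ simplex A₁ := fun l => by rw [h.1 l]; exact gibbs_mem hτ₁pos
  have hp'mem : ∀ l, p' l ∈ simplex A₁ := fun l => by rw [h'.1 l]; exact gibbs_mem hτ₁pos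
  have hppos : ∀ l a, 0 < p l a := fun l a => by rw [h.1 l]; exact gibbs_pos hτ₁pos a
  have hp'pos : ∀ l a, 0 < p' l a := fun l a => by rw [h'.1 l]; exact gibbs_pos hτ₁pos a
  have hqmem : ∀ l, q l ∈ simplex A₂ := fun l => by rw [h.2 l]; exact gibbs_mem hτ₂pos
  have hq'mem : ∀ l, q' l ∈ simplex A₂ := fun l => by rw [h'.2 l]; exact gibbs_mem hτ₂pos
  have hqpos : ∀ l a, 0 < q l a := fun l a => by rw [h.2 l]; exact gibbs_pos hτ₂pos a
  have hq'pos : ∀ l a, 0 < q' l a := fun l a => by rw [h'.2 l]; exact gibbs_pos hτ₂pos a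
  have hS1nn : ∀ l ∈ Λ₁.attach, 0 ≤ β₁ l.1 *
      (ip v (p l) - ip v (p' l) + (ip v' (p' l) - ip v' (p l))) := by
    intro l _
    rw [hterm1 l]
    have k1 : 0 ≤ KL (p' l) (p l) := KL_nonneg (hp'mem l) (hppos l) (hpmem l).2
    have k2 : 0 ≤ KL (p l) (p' l) := KL_nonneg (hpmem l) (hp'pos l) (hp'mem l).2
    have := hΛ₁pos l.1 l.2
    have := hβ₁ l.1 l.2
    positivity
  have hS2nn : ∀ l ∈ Λ₂.attach, 0 ≤ β₂ l.1 *
      (ip w (q l) - ip w (q' l) + (ip w' (q' l) - ip w' (q l))) := by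
    intro l _
    rw [hterm2 l]
    have k1 : 0 ≤ KL (q' l) (q l) := KL_nonneg (hq'mem l) (hqpos l) (hqmem l).2
    have k2 : 0 ≤ KL (q l) (q' l) := KL_nonneg (hqmem l) (hq'pos l) (hq'mem l).2
    have := hΛ₂pos l.1 l.2
    have := hβ₂ l.1 l.2
    positivity
  have hS1nonneg : 0 ≤ S1 := Finset.sum_nonneg hS1nn
  have hS2nonneg : 0 ≤ S2 := Finset.sum_nonneg hS2nn
  have hsum0 : S1 + S2 = 0 := by
    have e1 := ip_u1_avg (M := M) (β₁ := β₁) (β₂ := β₂) q p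
    have e2 := ip_u1_avg (M := M) (β₁ := β₁) (β₂ := β₂) q p'
    have e3 := ip_u1_avg (M := M) (β₁ := β₁) (β₂ := β₂) q' p'
    have e4 := ip_u1_avg (M := M) (β₁ := β₁) (β₂ := β₂) q' p
    rw [← hv, ← hw] at e1
    rw [← hv, ← hw'] at e2
    rw [← hv', ← hw'] at e3
    rw [← hv', ← hw] at e4
    have hS1e : S1 = (∑ l ∈ Λ₁.attach, β₁ l.1 * ip v (p l))
        - (∑ l ∈ Λ₁.attach, β₁ l.1 * ip v (p' l))
        + ((∑ l ∈ Λ₁.attach, β₁ l.1 * ip v' (p' l))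
        - (∑ l ∈ Λ₁.attach, β₁ l.1 * ip v' (p l))) := by
      rw [hS1def]
      simp only [mul_add, mul_sub]
      rw [Finset.sum_add_distrib, Finset.sum_sub_distrib, Finset.sum_sub_distrib]
    have hS2e : S2 = (∑ l ∈ Λ₂.attach, β₂ l.1 * ip w (q l))
        - (∑ l ∈ Λ₂.attach, β₂ l.1 * ip w (q' l))
        + ((∑ l ∈ Λ₂.attach, β₂ l.1 * ip w' (q' l))
        - (∑ l ∈ Λ₂.attach, β₂ l.1 * ip w' (q l))) := by
      rw [hS2def]
      simp only [mul_add, mul_sub]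
      rw [Finset.sum_add_distrib, Finset.sum_sub_distrib, Finset.sum_sub_distrib]
    rw [hS1e, hS2e]
    linarith
  have hS1z : S1 = 0 := by linarith
  have hS2z : S2 = 0 := by linarith
  have hpeq : ∀ l : {l // l ∈ Λ₁}, β₁ l.1 ≠ 0 → p l = p' l := by
    intro l hb
    have ht := (Finset.sum_eq_zero_iff_of_nonneg hS1nn).1 hS1z l (Finset.mem_attach _ l)
    rw [hterm1 l] at ht
    by_contra hne
    have k1 : 0 < KL (p l) (p' l) := KL_pos (hpmem l) (hp'pos l) (hp'mem l).2 hne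
    have k2 : 0 ≤ KL (p' l) (p l) := KL_nonneg (hp'mem l) (hppos l) (hpmem l).2
    have hβpos : 0 < β₁ l.1 := lt_of_le_of_ne (hβ₁ l.1 l.2) (Ne.symm hb)
    have hlpos := hΛ₁pos l.1 l.2
    have : 0 < β₁ l.1 * (l.1 * (KL (p' l) (p l) + KL (p l) (p' l))) :=
      mul_pos hβpos (mul_pos hlpos (by linarith))
    linarith
  have hqeq : ∀ l : {l // l ∈ Λ₂}, β₂ l.1 ≠ 0 → q l = q' l := by
    intro l hb
    have ht := (Finset.sum_eq_zero_iff_of_nonneg hS2nn).1 hS2z l (Finset.mem_attach _ l)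
    rw [hterm2 l] at ht
    by_contra hne
    have k1 : 0 < KL (q l) (q' l) := KL_pos (hqmem l) (hq'pos l) (hq'mem l).2 hne
    have k2 : 0 ≤ KL (q' l) (q l) := KL_nonneg (hq'mem l) (hqpos l) (hqmem l).2
    have hβpos : 0 < β₂ l.1 := lt_of_le_of_ne (hβ₂ l.1 l.2) (Ne.symm hb)
    have hlpos := hΛ₂pos l.1 l.2
    have : 0 < β₂ l.1 * (l.1 * (KL (q' l) (q l) + KL (q l) (q' l))) :=
      mul_pos hβpos (mul_pos hlpos (by linarith))
    linarith
  have hyq : avg Λ₂ β₂ q = avg Λ₂ β₂ q' := by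
    funext b
    unfold avg
    refine Finset.sum_congr rfl fun l _ => ?_
    rcases eq_or_ne (β₂ l.1) 0 with h0 | h0
    · rw [h0]; ring
    · rw [hqeq l h0]
  have hxp : avg Λ₁ β₁ p = avg Λ₁ β₁ p' := by
    funext b
    unfold avg
    refine Finset.sum_congr rfl fun l _ => ?_
    rcases eq_or_ne (β₁ l.1) 0 with h0 | h0
    · rw [h0]; ring
    · rw [hpeq l h0]
  constructor
  · funext l
    rw [h.1 l, h'.1 l]
    unfold u1
    rw [hyq]
  · funext l
    rw [h.2 l, h'.2 l]
    unfold u2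
    rw [hxp]

end Game

end RegGame

/-- the regularized two-player zero-sum Bayesian game admits exactly one
Bayes–Nash equilibrium: a unique collection `(x*_{i,λ})_{i∈{1,2}, λ∈Λ_i}` of policies
such that for each player `i` and each type `λ ∈ Λ_i`, `x*_{i,λ}` maximizes
`x ↦ ⟨M_i x̄*_{−i}, x⟩ − λ D_KL(x‖τ_i)` over `Δ(A_i)`, where
`x̄*_{−i} = E_{λ'∼β_{−i}}[x*_{−i,λ'}]`, `M_1 = M`, `M_2 = −Mᵀ`. -/
theorem regularized_game_unique_bayes_nash
    {A₁ A₂ : Type*} [Fintype A₁] [Fintype A₂] [Nonempty A₁] [Nonempty A₂]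
    (M : Matrix A₁ A₂ ℝ)
    (Λ₁ Λ₂ : Finset ℝ) (hΛ₁ : Λ₁.Nonempty) (hΛ₂ : Λ₂.Nonempty)
    (hΛ₁pos : ∀ l ∈ Λ₁, (0 : ℝ) < l) (hΛ₂pos : ∀ l ∈ Λ₂, (0 : ℝ) < l)
    (β₁ β₂ : ℝ → ℝ)
    (hβ₁ : ∀ l ∈ Λ₁, 0 ≤ β₁ l) (hβ₁sum : ∑ l ∈ Λ₁, β₁ l = 1)
    (hβ₂ : ∀ l ∈ Λ₂, 0 ≤ β₂ l) (hβ₂sum : ∑ l ∈ Λ₂, β₂ l = 1)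
    (τ₁ : A₁ → ℝ) (hτ₁ : τ₁ ∈ simplex A₁) (hτ₁pos : ∀ a, 0 < τ₁ a)
    (τ₂ : A₂ → ℝ) (hτ₂ : τ₂ ∈ simplex A₂) (hτ₂pos : ∀ a, 0 < τ₂ a) :
    ∃! p : ({l // l ∈ Λ₁} → A₁ → ℝ) × ({l // l ∈ Λ₂} → A₂ → ℝ),
      (∀ l : {l // l ∈ Λ₁},
        p.1 l ∈ simplex A₁ ∧
        IsMaxOn
          (fun x => ip (M.mulVec (fun b => ∑ l' ∈ Λ₂.attach, β₂ l'.1 * p.2 l' b)) x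
            - l.1 * KL x τ₁)
          (simplex A₁) (p.1 l)) ∧
      (∀ l : {l // l ∈ Λ₂},
        p.2 l ∈ simplex A₂ ∧
        IsMaxOn
          (fun x => ip (-(M.transpose.mulVec (fun a => ∑ l' ∈ Λ₁.attach, β₁ l'.1 * p.1 l' a))) x
            - l.1 * KL x τ₂)
          (simplex A₂) (p.2 l)) := by
  classical
  have char : ∀ (p : {l // l ∈ Λ₁} → A₁ → ℝ) (q : {l // l ∈ Λ₂} → A₂ → ℝ),
      ((∀ l : {l // l ∈ Λ₁},
        p l ∈ simplex A₁ ∧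
        IsMaxOn
          (fun x => ip (M.mulVec (fun b => ∑ l' ∈ Λ₂.attach, β₂ l'.1 * q l' b)) x
            - l.1 * KL x τ₁)
          (simplex A₁) (p l)) ∧
      (∀ l : {l // l ∈ Λ₂},
        q l ∈ simplex A₂ ∧
        IsMaxOn
          (fun x => ip (-(M.transpose.mulVec (fun a => ∑ l' ∈ Λ₁.attach, β₁ l'.1 * p l' a))) x
            - l.1 * KL x τ₂)
          (simplex A₂) (q l)))
      ↔ RegGame.IsFix M Λ₁ Λ₂ β₁ β₂ τ₁ τ₂ p q := by
    intro p q
    constructor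
    · rintro ⟨h1, h2⟩
      constructor
      · intro l
        exact RegGame.eq_gibbs_of_isMaxOn (hΛ₁pos l.1 l.2) hτ₁pos (h1 l).1 (h1 l).2
      · intro l
        exact RegGame.eq_gibbs_of_isMaxOn (hΛ₂pos l.1 l.2) hτ₂pos (h2 l).1 (h2 l).2
    · rintro ⟨h1, h2⟩
      constructor
      · intro l
        refine ⟨?_, ?_⟩
        · rw [h1 l]
          exact RegGame.gibbs_mem hτ₁pos
        · rw [h1 l]
          exact RegGame.gibbs_isMaxOn (hΛ₁pos l.1 l.2) hτ₁pos
      · intro l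
        refine ⟨?_, ?_⟩
        · rw [h2 l]
          exact RegGame.gibbs_mem hτ₂pos
        · rw [h2 l]
          exact RegGame.gibbs_isMaxOn (hΛ₂pos l.1 l.2) hτ₂pos
  obtain ⟨p0, q0, hfix⟩ :=
    RegGame.exists_fixed (M := M) hΛ₁pos hΛ₂pos hβ₁ hβ₂ hτ₁pos hτ₂ hτ₂pos
  refine ⟨(p0, q0), (char p0 q0).2 hfix, ?_⟩
  rintro ⟨p, q⟩ hpq
  have hf := (char p q).1 hpq
  obtain ⟨hp, hq⟩ := RegGame.unique_fixed hΛ₁pos hΛ₂pos hβ₁ hβ₂ hτ₁pos hτ₂pos hf hfix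
  exact Prod.ext hp hq
end
end

section
/- Let (x*_{i,λ}) be the Bayes–Nash equilibrium of the regularized game. Let x'_{i,λ} ∈ Δ(A_i) be arbitrary policies with strictly positive entries, for i ∈ {1,2} and λ ∈ Λ_i, and set x̄'_1 := E_{λ∼β_1}[x'_{1,λ}], x̄'_2 := E_{λ∼β_2}[x'_{2,λ}]. Define α := E_{λ∼β_1}[ ⟨ −M x̄'_2 + λ∇φ(x'_{1,λ}) − λ∇φ(τ_1), x*_{1,λ} − x'_{1,λ} ⟩ ] and β := E_{λ∼β_2}[ ⟨ Mᵀ x̄'_1 + λ∇φ(x'_{2,λ}) − λ∇φ(τ_2), x*_{2,λ} − x'_{2,λ} ⟩ ]. Then α + β ≤ −∑_{i∈{1,2}} E_{λ∼β_i}[ λ ( D_KL(x'_{i,λ}‖x*_{i,λ}) + D_KL(x*_{i,λ}‖x'_{i,λ}) ) ]. -/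
open Finset Real

noncomputable section

lemma opt_char {A : Type*} [Fintype A] [Nonempty A] (lam : ℝ) (hlam : 0 < lam)
    (τ : A → ℝ) (hτpos : ∀ a, 0 < τ a)
    (u : A → ℝ) (xs : A → ℝ) (hxs : xs ∈ simplex A)
    (hmax : IsMaxOn (fun x => ip u x - lam * KL x τ) (simplex A) xs) :
    (∀ a, 0 < xs a) ∧ ∃ c : ℝ, ∀ a, lam * (Real.log (xs a) - Real.log (τ a)) = u a - c := by
  obtain ⟨hxs0, hxs1⟩ := hxs
  set Z : ℝ := ∑ a, τ a * Real.exp (u a / lam) with hZdef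
  have hZpos : 0 < Z := Finset.sum_pos (fun a _ => mul_pos (hτpos a) (Real.exp_pos _))
    Finset.univ_nonempty
  set p : A → ℝ := fun a => τ a * Real.exp (u a / lam) / Z with hpdef
  have hppos : ∀ a, 0 < p a := fun a => div_pos (mul_pos (hτpos a) (Real.exp_pos _)) hZpos
  have hpsum : ∑ a, p a = 1 := by
    simp only [hpdef, ← Finset.sum_div]
    rw [← hZdef, div_self hZpos.ne']
  have hlogp : ∀ a, Real.log (p a) = Real.log (τ a) + u a / lam - Real.log Z := by
    intro a
    rw [hpdef]
    rw [Real.log_div (mul_pos (hτpos a) (Real.exp_pos _)).ne' hZpos.ne',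
      Real.log_mul (hτpos a).ne' (Real.exp_pos _).ne', Real.log_exp]
  -- Gibbs identity
  have hid : ∀ x : A → ℝ, x ∈ simplex A →
      ip u x - lam * KL x τ = lam * Real.log Z - lam * KL x p := by
    intro x ⟨hx0, hx1⟩
    have hpt : ∀ a, u a * x a - lam * (x a * Real.log (x a / τ a))
        = lam * Real.log Z * x a - lam * (x a * Real.log (x a / p a)) := by
      intro a
      rcases eq_or_lt_of_le (hx0 a) with h | h
      · simp [← h]
      · rw [Real.log_div h.ne' (hτpos a).ne', Real.log_div h.ne' (hppos a).ne', hlogp a]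
        field_simp
        ring
    have hsum : ∑ a, (u a * x a - lam * (x a * Real.log (x a / τ a)))
        = ∑ a, (lam * Real.log Z * x a - lam * (x a * Real.log (x a / p a))) :=
      Finset.sum_congr rfl (fun a _ => hpt a)
    simp only [Finset.sum_sub_distrib, ← Finset.mul_sum] at hsum
    have hc : ∑ a, lam * Real.log Z * x a = lam * Real.log Z := by
      rw [← Finset.mul_sum, hx1, mul_one]
    rw [← Finset.mul_sum] at hc
    rw [hc] at hsum
    simpa [ip, KL, Finset.mul_sum] using hsum
  have hKLpp : KL p p = 0 := by
    unfold KL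
    apply Finset.sum_eq_zero
    intro a _
    rw [div_self (hppos a).ne', Real.log_one, mul_zero]
  have hge := hmax ⟨fun a => (hppos a).le, hpsum⟩
  simp only [Set.mem_setOf_eq] at hge
  rw [hid xs ⟨hxs0, hxs1⟩, hid p ⟨fun a => (hppos a).le, hpsum⟩, hKLpp] at hge
  have hKLle : KL xs p ≤ 0 := by nlinarith
  -- Gibbs inequality with equality
  set f : A → ℝ := fun a => xs a * Real.log (xs a / p a) - (xs a - p a) with hfdef
  have hf0 : ∀ a, 0 ≤ f a := by
    intro a
    rcases eq_or_lt_of_le (hxs0 a) with h | h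
    · simp [hfdef, ← h, (hppos a).le]
    · have h1 : Real.log (p a / xs a) ≤ p a / xs a - 1 :=
        Real.log_le_sub_one_of_pos (div_pos (hppos a) h)
      have h2 : Real.log (xs a / p a) = - Real.log (p a / xs a) := by
        rw [Real.log_div (hppos a).ne' h.ne', Real.log_div h.ne' (hppos a).ne']; ring
      have h3 : (p a / xs a - 1) * xs a = p a - xs a := by field_simp
      simp only [hfdef]
      nlinarith
  have hsumf : ∑ a, f a = KL xs p := by
    simp [hfdef, Finset.sum_sub_distrib, hxs1, hpsum, KL]
  have hfzero : ∀ a, f a = 0 := by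
    have : ∑ a, f a = 0 := le_antisymm (by rw [hsumf]; exact hKLle)
      (Finset.sum_nonneg (fun a _ => hf0 a))
    intro a
    exact (Finset.sum_eq_zero_iff_of_nonneg (fun a _ => hf0 a)).mp this a (Finset.mem_univ a)
  have hpos : ∀ a, 0 < xs a := by
    intro a
    rcases eq_or_lt_of_le (hxs0 a) with h | h
    · exfalso
      have := hfzero a
      simp [hfdef, ← h] at this
      exact (hppos a).ne' this
    · exact h
  have heq : xs = p := by
    funext a
    by_contra hne
    have hx := hpos a
    have hne' : p a / xs a ≠ 1 := by
      intro h
      exact hne (by field_simp at h; linarith)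
    have h1 : Real.log (p a / xs a) < p a / xs a - 1 :=
      Real.log_lt_sub_one_of_pos (div_pos (hppos a) hx) hne'
    have h2 : Real.log (xs a / p a) = - Real.log (p a / xs a) := by
      rw [Real.log_div (hppos a).ne' hx.ne', Real.log_div hx.ne' (hppos a).ne']; ring
    have h3 : (p a / xs a - 1) * xs a = p a - xs a := by field_simp
    have := hfzero a
    simp only [hfdef] at this
    nlinarith
  refine ⟨hpos, lam * Real.log Z, fun a => ?_⟩
  rw [heq, hlogp a]
  field_simp
  ring

lemma KL_cross {A : Type*} [Fintype A] (x' xs : A → ℝ)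
    (hx' : ∀ a, 0 < x' a) (hxs : ∀ a, 0 < xs a) :
    ∑ a, (Real.log (x' a) - Real.log (xs a)) * (xs a - x' a)
      = -(KL x' xs + KL xs x') := by
  unfold KL
  rw [← Finset.sum_add_distrib, ← Finset.sum_neg_distrib]
  apply Finset.sum_congr rfl
  intro a _
  rw [Real.log_div (hx' a).ne' (hxs a).ne', Real.log_div (hxs a).ne' (hx' a).ne']
  ring


/-- strong-convexity inequality at the Bayes–Nash equilibrium of the
regularized game: with `α` and `β` as defined below,
`α + β ≤ −∑_{i∈{1,2}} E_{λ∼β_i}[λ(D_KL(x'_{i,λ}‖x*_{i,λ}) + D_KL(x*_{i,λ}‖x'_{i,λ}))]`. -/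
theorem regularized_equilibrium_strong_convexity
    {A₁ A₂ : Type*} [Fintype A₁] [Fintype A₂] [Nonempty A₁] [Nonempty A₂]
    (M : Matrix A₁ A₂ ℝ)
    (Λ₁ Λ₂ : Finset ℝ) (hΛ₁ : Λ₁.Nonempty) (hΛ₂ : Λ₂.Nonempty)
    (hΛ₁pos : ∀ l ∈ Λ₁, (0 : ℝ) < l) (hΛ₂pos : ∀ l ∈ Λ₂, (0 : ℝ) < l)
    (β₁ β₂ : ℝ → ℝ)
    (hβ₁ : ∀ l ∈ Λ₁, 0 ≤ β₁ l) (hβ₁sum : ∑ l ∈ Λ₁, β₁ l = 1)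
    (hβ₂ : ∀ l ∈ Λ₂, 0 ≤ β₂ l) (hβ₂sum : ∑ l ∈ Λ₂, β₂ l = 1)
    (τ₁ : A₁ → ℝ) (hτ₁ : τ₁ ∈ simplex A₁) (hτ₁pos : ∀ a, 0 < τ₁ a)
    (τ₂ : A₂ → ℝ) (hτ₂ : τ₂ ∈ simplex A₂) (hτ₂pos : ∀ a, 0 < τ₂ a)
    -- the Bayes–Nash equilibrium of the regularized game
    (xs₁ : ℝ → A₁ → ℝ) (xs₂ : ℝ → A₂ → ℝ)
    (hxs₁ : ∀ l ∈ Λ₁,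
      xs₁ l ∈ simplex A₁ ∧
      IsMaxOn
        (fun x => ip (M.mulVec (fun b => ∑ l' ∈ Λ₂, β₂ l' * xs₂ l' b)) x - l * KL x τ₁)
        (simplex A₁) (xs₁ l))
    (hxs₂ : ∀ l ∈ Λ₂,
      xs₂ l ∈ simplex A₂ ∧
      IsMaxOn
        (fun x => ip (-(M.transpose.mulVec (fun a => ∑ l' ∈ Λ₁, β₁ l' * xs₁ l' a))) x
          - l * KL x τ₂)
        (simplex A₂) (xs₂ l))
    -- arbitrary strictly positive policies
    (x'₁ : ℝ → A₁ → ℝ) (x'₂ : ℝ → A₂ → ℝ)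
    (hx'₁ : ∀ l ∈ Λ₁, x'₁ l ∈ simplex A₁ ∧ ∀ a, 0 < x'₁ l a)
    (hx'₂ : ∀ l ∈ Λ₂, x'₂ l ∈ simplex A₂ ∧ ∀ a, 0 < x'₂ l a)
    (alpha beta : ℝ)
    (halpha : alpha =
      ∑ l ∈ Λ₁, β₁ l *
        ip (-(M.mulVec (fun b => ∑ l' ∈ Λ₂, β₂ l' * x'₂ l' b))
              + l • gradPhi (x'₁ l) - l • gradPhi τ₁)
           (xs₁ l - x'₁ l))
    (hbeta : beta =
      ∑ l ∈ Λ₂, β₂ l *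
        ip (M.transpose.mulVec (fun a => ∑ l' ∈ Λ₁, β₁ l' * x'₁ l' a)
              + l • gradPhi (x'₂ l) - l • gradPhi τ₂)
           (xs₂ l - x'₂ l)) :
    alpha + beta
      ≤ -(∑ l ∈ Λ₁, β₁ l * (l * (KL (x'₁ l) (xs₁ l) + KL (xs₁ l) (x'₁ l)))
          + ∑ l ∈ Λ₂, β₂ l * (l * (KL (x'₂ l) (xs₂ l) + KL (xs₂ l) (x'₂ l)))) := by
  classical
  set ys : A₂ → ℝ := fun b => ∑ l' ∈ Λ₂, β₂ l' * xs₂ l' b with hys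
  set yp : A₂ → ℝ := fun b => ∑ l' ∈ Λ₂, β₂ l' * x'₂ l' b with hyp
  set zs : A₁ → ℝ := fun a => ∑ l' ∈ Λ₁, β₁ l' * xs₁ l' a with hzs
  set zp : A₁ → ℝ := fun a => ∑ l' ∈ Λ₁, β₁ l' * x'₁ l' a with hzp
  -- optimality characterizations
  have H1 : ∀ l ∈ Λ₁, (∀ a, 0 < xs₁ l a) ∧
      ∃ c : ℝ, ∀ a, l * (Real.log (xs₁ l a) - Real.log (τ₁ a)) = M.mulVec ys a - c :=
    fun l hl => opt_char l (hΛ₁pos l hl) τ₁ hτ₁pos _ (xs₁ l) (hxs₁ l hl).1 (hxs₁ l hl).2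
  have H2 : ∀ l ∈ Λ₂, (∀ b, 0 < xs₂ l b) ∧
      ∃ c : ℝ, ∀ b, l * (Real.log (xs₂ l b) - Real.log (τ₂ b)) =
        (-(M.transpose.mulVec zs)) b - c :=
    fun l hl => opt_char l (hΛ₂pos l hl) τ₂ hτ₂pos _ (xs₂ l) (hxs₂ l hl).1 (hxs₂ l hl).2
  choose hpos₁ c₁ hc₁ using H1
  choose hpos₂ c₂ hc₂ using H2
  -- per-type identity, player 1
  have hterm₁ : ∀ l ∈ Λ₁,
      ip (-(M.mulVec yp) + l • gradPhi (x'₁ l) - l • gradPhi τ₁) (xs₁ l - x'₁ l)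
        = (∑ a, (M.mulVec ys a - M.mulVec yp a) * (xs₁ l a - x'₁ l a))
          - l * (KL (x'₁ l) (xs₁ l) + KL (xs₁ l) (x'₁ l)) := by
    intro l hl
    have hd0 : ∑ a, (xs₁ l a - x'₁ l a) = 0 := by
      rw [Finset.sum_sub_distrib, ((hxs₁ l hl).1).2, ((hx'₁ l hl).1).2, sub_self]
    unfold ip gradPhi
    simp only [Pi.add_apply, Pi.sub_apply, Pi.neg_apply, Pi.smul_apply, smul_eq_mul]
    have hpt : ∀ a ∈ Finset.univ,
        (-(M.mulVec yp) a + l * (1 + Real.log (x'₁ l a)) - l * (1 + Real.log (τ₁ a)))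
            * (xs₁ l a - x'₁ l a)
          = (M.mulVec ys a - M.mulVec yp a) * (xs₁ l a - x'₁ l a)
            + (Real.log (x'₁ l a) - Real.log (xs₁ l a)) * (xs₁ l a - x'₁ l a) * l
            - c₁ l hl * (xs₁ l a - x'₁ l a) := by
      intro a _
      have h := hc₁ l hl a
      linear_combination (xs₁ l a - x'₁ l a) * h
    rw [Finset.sum_congr rfl hpt, Finset.sum_sub_distrib, Finset.sum_add_distrib,
      ← Finset.sum_mul, ← Finset.mul_sum, hd0, mul_zero, sub_zero,
      KL_cross (x'₁ l) (xs₁ l) (hx'₁ l hl).2 (hpos₁ l hl)]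
    ring
  -- per-type identity, player 2
  have hterm₂ : ∀ l ∈ Λ₂,
      ip (M.transpose.mulVec zp + l • gradPhi (x'₂ l) - l • gradPhi τ₂) (xs₂ l - x'₂ l)
        = (∑ b, (M.transpose.mulVec zp b - M.transpose.mulVec zs b) * (xs₂ l b - x'₂ l b))
          - l * (KL (x'₂ l) (xs₂ l) + KL (xs₂ l) (x'₂ l)) := by
    intro l hl
    have hd0 : ∑ b, (xs₂ l b - x'₂ l b) = 0 := by
      rw [Finset.sum_sub_distrib, ((hxs₂ l hl).1).2, ((hx'₂ l hl).1).2, sub_self]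
    unfold ip gradPhi
    simp only [Pi.add_apply, Pi.sub_apply, Pi.neg_apply, Pi.smul_apply, smul_eq_mul]
    have hpt : ∀ b ∈ Finset.univ,
        ((M.transpose.mulVec zp) b + l * (1 + Real.log (x'₂ l b)) - l * (1 + Real.log (τ₂ b)))
            * (xs₂ l b - x'₂ l b)
          = (M.transpose.mulVec zp b - M.transpose.mulVec zs b) * (xs₂ l b - x'₂ l b)
            + (Real.log (x'₂ l b) - Real.log (xs₂ l b)) * (xs₂ l b - x'₂ l b) * l
            - c₂ l hl * (xs₂ l b - x'₂ l b) := by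
      intro b _
      have h := hc₂ l hl b
      simp only [Pi.neg_apply] at h
      linear_combination (xs₂ l b - x'₂ l b) * h
    rw [Finset.sum_congr rfl hpt, Finset.sum_sub_distrib, Finset.sum_add_distrib,
      ← Finset.sum_mul, ← Finset.mul_sum, hd0, mul_zero, sub_zero,
      KL_cross (x'₂ l) (xs₂ l) (hx'₂ l hl).2 (hpos₂ l hl)]
    ring
  -- aggregate cross terms
  have hC₁ : ∑ l ∈ Λ₁, β₁ l * (∑ a, (M.mulVec ys a - M.mulVec yp a) * (xs₁ l a - x'₁ l a))
      = ∑ a, (M.mulVec ys a - M.mulVec yp a) * (zs a - zp a) := by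
    simp only [Finset.mul_sum]
    rw [Finset.sum_comm]
    apply Finset.sum_congr rfl
    intro a _
    have : ∑ l ∈ Λ₁, β₁ l * ((M.mulVec ys a - M.mulVec yp a) * (xs₁ l a - x'₁ l a))
        = (M.mulVec ys a - M.mulVec yp a) * ∑ l ∈ Λ₁, (β₁ l * xs₁ l a - β₁ l * x'₁ l a) := by
      rw [Finset.mul_sum]
      exact Finset.sum_congr rfl fun l _ => by ring
    rw [this, Finset.sum_sub_distrib]
  have hC₂ : ∑ l ∈ Λ₂, β₂ l *
        (∑ b, (M.transpose.mulVec zp b - M.transpose.mulVec zs b) * (xs₂ l b - x'₂ l b))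
      = ∑ b, (M.transpose.mulVec zp b - M.transpose.mulVec zs b) * (ys b - yp b) := by
    simp only [Finset.mul_sum]
    rw [Finset.sum_comm]
    apply Finset.sum_congr rfl
    intro b _
    have : ∑ l ∈ Λ₂, β₂ l * ((M.transpose.mulVec zp b - M.transpose.mulVec zs b) * (xs₂ l b - x'₂ l b))
        = (M.transpose.mulVec zp b - M.transpose.mulVec zs b) * ∑ l ∈ Λ₂, (β₂ l * xs₂ l b - β₂ l * x'₂ l b) := by
      rw [Finset.mul_sum]
      exact Finset.sum_congr rfl fun l _ => by ring
    rw [this, Finset.sum_sub_distrib]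
  have hcancel : (∑ a, (M.mulVec ys a - M.mulVec yp a) * (zs a - zp a))
      + (∑ b, (M.transpose.mulVec zp b - M.transpose.mulVec zs b) * (ys b - yp b)) = 0 := by
    have h1 : ∀ a, (M.mulVec ys a - M.mulVec yp a) * (zs a - zp a)
        = ∑ b, M a b * (ys b - yp b) * (zs a - zp a) := by
      intro a
      rw [← Finset.sum_mul]
      congr 1
      simp [Matrix.mulVec, dotProduct, mul_sub, Finset.sum_sub_distrib]
    have h2 : ∀ b, (M.transpose.mulVec zp b - M.transpose.mulVec zs b) * (ys b - yp b)
        = ∑ a, M a b * (zp a - zs a) * (ys b - yp b) := by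
      intro b
      rw [← Finset.sum_mul]
      congr 1
      simp [Matrix.mulVec, dotProduct, Matrix.transpose_apply, mul_sub, Finset.sum_sub_distrib]
    rw [Finset.sum_congr rfl (fun a _ => h1 a), Finset.sum_congr rfl (fun b _ => h2 b),
      Finset.sum_comm (s := Finset.univ) (t := Finset.univ), ← Finset.sum_add_distrib]
    apply Finset.sum_eq_zero
    intro b _
    rw [← Finset.sum_add_distrib]
    apply Finset.sum_eq_zero
    intro a _
    ring
  -- assemble
  have halpha' : alpha
      = (∑ l ∈ Λ₁, β₁ l * (∑ a, (M.mulVec ys a - M.mulVec yp a) * (xs₁ l a - x'₁ l a)))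
        - ∑ l ∈ Λ₁, β₁ l * (l * (KL (x'₁ l) (xs₁ l) + KL (xs₁ l) (x'₁ l))) := by
    rw [halpha, ← Finset.sum_sub_distrib]
    apply Finset.sum_congr rfl
    intro l hl
    rw [hterm₁ l hl]
    ring
  have hbeta' : beta
      = (∑ l ∈ Λ₂, β₂ l *
          (∑ b, (M.transpose.mulVec zp b - M.transpose.mulVec zs b) * (xs₂ l b - x'₂ l b)))
        - ∑ l ∈ Λ₂, β₂ l * (l * (KL (x'₂ l) (xs₂ l) + KL (xs₂ l) (x'₂ l))) := by
    rw [hbeta, ← Finset.sum_sub_distrib]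
    apply Finset.sum_congr rfl
    intro l hl
    rw [hterm₂ l hl]
    ring
  rw [halpha', hbeta', hC₁, hC₂]
  linarith [hcancel]
end
end
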